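/- arXiv:2011.09415 — 6 statements merged into one kernel-verified Lean document; each statement's English description precedes it below -/
import Mathlib

section
/- Let n ≥ 1 be an integer. Then the Laurent polynomial P(n) has highest exponent h(P(n)) = 3n+2, where the coefficient of A^{3n+2} is (−1)^n, and lowest exponent ℓ(P(n)) = −n−6, where the coefficient of A^{−n−6} is 1. Similarly, P̄(n) has highest exponent h(P̄(n)) = n+6 with coefficient 1, and lowest exponent ℓ(P̄(n)) = −3n−2 with coefficient (−1)^n. Consequently the product P(n)·P̄(n) has highest exponent 4n+8 and lowest exponent −4n−8. -/
open LaurentPolynomial Finset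

/-- The coefficient of `A^k` in the Laurent polynomial `y ∈ ℤ[A,A⁻¹]`. -/
noncomputable def coeffA (y : LaurentPolynomial ℤ) (k : ℤ) : ℤ := y.coeff k

/-- `y` has highest exponent `d`, with coefficient `c` (nonzero) on `A^d`. -/
def HiCoeff (y : LaurentPolynomial ℤ) (d c : ℤ) : Prop :=
  coeffA y d = c ∧ c ≠ 0 ∧ ∀ k, d < k → coeffA y k = 0

/-- `y` has lowest exponent `d`, with coefficient `c` (nonzero) on `A^d`. -/
def LoCoeff (y : LaurentPolynomial ℤ) (d c : ℤ) : Prop :=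
  coeffA y d = c ∧ c ≠ 0 ∧ ∀ k, k < d → coeffA y k = 0

/-- `y` has highest exponent `d`: `h(y) = d`. -/
def IsHi (y : LaurentPolynomial ℤ) (d : ℤ) : Prop :=
  coeffA y d ≠ 0 ∧ ∀ k, d < k → coeffA y k = 0

/-- `y` has lowest exponent `d`: `ℓ(y) = d`. -/
def IsLo (y : LaurentPolynomial ℤ) (d : ℤ) : Prop :=
  coeffA y d ≠ 0 ∧ ∀ k, k < d → coeffA y k = 0

/-- P(n) = A^{−n−6} + (A⁴+A⁻⁴)·Σ_{k=1}^{n} (−1)^k A^{4k−n−2} -/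
noncomputable def P (n : ℕ) : LaurentPolynomial ℤ :=
  T (-(n:ℤ) - 6) +
    (T 4 + T (-4)) * ∑ k ∈ Finset.Icc 1 n, (-1 : LaurentPolynomial ℤ)^k * T (4*(k:ℤ) - n - 2)

/-- P̄(n) = A^{n+6} + (A⁴+A⁻⁴)·Σ_{k=1}^{n} (−1)^k A^{−4k+n+2} -/
noncomputable def Pbar (n : ℕ) : LaurentPolynomial ℤ :=
  T ((n:ℤ) + 6) +
    (T 4 + T (-4)) * ∑ k ∈ Finset.Icc 1 n, (-1 : LaurentPolynomial ℤ)^k * T (-4*(k:ℤ) + n + 2)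

/-- Q(j) = −A^{2−j} + Σ_{k=0}^{j} (−1)^{k+1} A^{4k−j−2} -/
noncomputable def Q (j : ℕ) : LaurentPolynomial ℤ :=
  -T (2 - (j:ℤ)) + ∑ k ∈ Finset.range (j+1), (-1 : LaurentPolynomial ℤ)^(k+1) * T (4*(k:ℤ) - j - 2)

/-- N(j) = (−A⁶−A⁻⁶)·(−A³)^j + (−A⁴−A⁻⁴+2)·Q(j) -/
noncomputable def N (j : ℕ) : LaurentPolynomial ℤ :=
  (-T 6 - T (-6)) * (-T 3)^j + (-T 4 - T (-4) + 2) * Q j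

/-- R(m) = A^{−m−5} + (A⁴+A⁻⁴)·Σ_{k=1}^{m−1} (−1)^k A^{4k−m−1} -/
noncomputable def Rm (m : ℕ) : LaurentPolynomial ℤ :=
  T (-(m:ℤ) - 5) +
    (T 4 + T (-4)) * ∑ k ∈ Finset.Icc 1 (m-1), (-1 : LaurentPolynomial ℤ)^k * T (4*(k:ℤ) - m - 1)


lemma mul_apply_expand (p q : LaurentPolynomial ℤ) (x : ℤ) :
    (p * q).coeff x = ∑ a ∈ p.coeff.support, ∑ b ∈ q.coeff.support, if a + b = x then p.coeff a * q.coeff b else 0 := by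
  classical
  rw [AddMonoidAlgebra.coeff_mul]
  rfl

lemma hi_mul {p q : LaurentPolynomial ℤ} {d e : ℤ}
    (hp : ∀ k, d < k → p.coeff k = 0) (hq : ∀ k, e < k → q.coeff k = 0) :
    (p * q).coeff (d + e) = p.coeff d * q.coeff e ∧ ∀ k, d + e < k → (p * q).coeff k = 0 := by
  classical
  have hsp : ∀ a ∈ p.coeff.support, a ≤ d := fun a ha =>
    le_of_not_gt fun h => (Finsupp.mem_support_iff.mp ha) (hp a h)
  have hsq : ∀ b ∈ q.coeff.support, b ≤ e := fun b hb =>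
    le_of_not_gt fun h => (Finsupp.mem_support_iff.mp hb) (hq b h)
  constructor
  · rw [mul_apply_expand]
    by_cases hd : p.coeff d = 0
    · rw [hd, zero_mul]
      refine Finset.sum_eq_zero fun a ha => Finset.sum_eq_zero fun b hb => ?_
      split_ifs with h
      · have h1 := hsp a ha; have h2 := hsq b hb
        have : a = d := by omega
        rw [this, hd, zero_mul]
      · rfl
    by_cases he : q.coeff e = 0
    · rw [he, mul_zero]
      refine Finset.sum_eq_zero fun a ha => Finset.sum_eq_zero fun b hb => ?_
      split_ifs with h
      · have h1 := hsp a ha; have h2 := hsq b hb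
        have : b = e := by omega
        rw [this, he, mul_zero]
      · rfl
    rw [Finset.sum_eq_single d (fun a ha hne => Finset.sum_eq_zero fun b hb => ?_)
      (fun hd' => absurd (Finsupp.mem_support_iff.mpr hd) hd')]
    · rw [Finset.sum_eq_single e (fun b hb hne => ?_)
        (fun he' => absurd (Finsupp.mem_support_iff.mpr he) he')]
      · rw [if_pos rfl]
      · exact if_neg (fun h => hne (by omega))
    · have h1 := hsp a ha; have h2 := hsq b hb
      exact if_neg (fun h => hne (by omega))
  · intro k hk
    rw [mul_apply_expand]
    refine Finset.sum_eq_zero fun a ha => Finset.sum_eq_zero fun b hb => ?_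
    have h1 := hsp a ha; have h2 := hsq b hb
    exact if_neg (by omega)

lemma lo_mul {p q : LaurentPolynomial ℤ} {d e : ℤ}
    (hp : ∀ k, k < d → p.coeff k = 0) (hq : ∀ k, k < e → q.coeff k = 0) :
    (p * q).coeff (d + e) = p.coeff d * q.coeff e ∧ ∀ k, k < d + e → (p * q).coeff k = 0 := by
  classical
  have hsp : ∀ a ∈ p.coeff.support, d ≤ a := fun a ha =>
    le_of_not_gt fun h => (Finsupp.mem_support_iff.mp ha) (hp a h)
  have hsq : ∀ b ∈ q.coeff.support, e ≤ b := fun b hb =>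
    le_of_not_gt fun h => (Finsupp.mem_support_iff.mp hb) (hq b h)
  constructor
  · rw [mul_apply_expand]
    by_cases hd : p.coeff d = 0
    · rw [hd, zero_mul]
      refine Finset.sum_eq_zero fun a ha => Finset.sum_eq_zero fun b hb => ?_
      split_ifs with h
      · have h1 := hsp a ha; have h2 := hsq b hb
        have : a = d := by omega
        rw [this, hd, zero_mul]
      · rfl
    by_cases he : q.coeff e = 0
    · rw [he, mul_zero]
      refine Finset.sum_eq_zero fun a ha => Finset.sum_eq_zero fun b hb => ?_
      split_ifs with h
      · have h1 := hsp a ha; have h2 := hsq b hb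
        have : b = e := by omega
        rw [this, he, mul_zero]
      · rfl
    rw [Finset.sum_eq_single d (fun a ha hne => Finset.sum_eq_zero fun b hb => ?_)
      (fun hd' => absurd (Finsupp.mem_support_iff.mpr hd) hd')]
    · rw [Finset.sum_eq_single e (fun b hb hne => ?_)
        (fun he' => absurd (Finsupp.mem_support_iff.mpr he) he')]
      · rw [if_pos rfl]
      · exact if_neg (fun h => hne (by omega))
    · have h1 := hsp a ha; have h2 := hsq b hb
      exact if_neg (fun h => hne (by omega))
  · intro k hk
    rw [mul_apply_expand]
    refine Finset.sum_eq_zero fun a ha => Finset.sum_eq_zero fun b hb => ?_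
    have h1 := hsp a ha; have h2 := hsq b hb
    exact if_neg (by omega)

lemma P_eq (n : ℕ) : P n = AddMonoidAlgebra.single (-(n:ℤ)-6) 1 +
    ∑ j ∈ Finset.Icc 1 n, (AddMonoidAlgebra.single (4*(j:ℤ)-n+2) ((-1:ℤ)^j)
      + AddMonoidAlgebra.single (4*(j:ℤ)-n-6) ((-1:ℤ)^j)) := by
  rw [P, Finset.mul_sum]
  congr 1
  refine Finset.sum_congr rfl fun j _ => ?_
  have h1 : ((-1 : LaurentPolynomial ℤ)^j) = C ((-1:ℤ)^j) := by simp
  rw [add_mul, h1, mul_left_comm, mul_left_comm (T (-4)), ← T_add, ← T_add,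
    ← single_eq_C_mul_T, ← single_eq_C_mul_T]
  congr 2 <;> ring

lemma Pbar_eq (n : ℕ) : Pbar n = AddMonoidAlgebra.single ((n:ℤ)+6) 1 +
    ∑ j ∈ Finset.Icc 1 n, (AddMonoidAlgebra.single (-4*(j:ℤ)+n+6) ((-1:ℤ)^j)
      + AddMonoidAlgebra.single (-4*(j:ℤ)+n-2) ((-1:ℤ)^j)) := by
  rw [Pbar, Finset.mul_sum]
  congr 1
  refine Finset.sum_congr rfl fun j _ => ?_
  have h1 : ((-1 : LaurentPolynomial ℤ)^j) = C ((-1:ℤ)^j) := by simp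
  rw [add_mul, h1, mul_left_comm, mul_left_comm (T (-4)), ← T_add, ← T_add,
    ← single_eq_C_mul_T, ← single_eq_C_mul_T]
  congr 2 <;> ring

lemma coeff_P (n : ℕ) (k : ℤ) : (P n).coeff k =
    (if -(n:ℤ)-6 = k then 1 else 0) +
    ∑ j ∈ Finset.Icc 1 n, ((if 4*(j:ℤ)-n+2 = k then ((-1:ℤ)^j) else 0)
      + (if 4*(j:ℤ)-n-6 = k then ((-1:ℤ)^j) else 0)) := by
  classical
  rw [P_eq]
  rw [AddMonoidAlgebra.coeff_add, AddMonoidAlgebra.coeff_sum, Finsupp.add_apply, Finsupp.finset_sum_apply]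
  simp only [AddMonoidAlgebra.coeff_add, AddMonoidAlgebra.coeff_single, Finsupp.add_apply, Finsupp.single_apply]

lemma coeff_Pbar (n : ℕ) (k : ℤ) : (Pbar n).coeff k =
    (if (n:ℤ)+6 = k then 1 else 0) +
    ∑ j ∈ Finset.Icc 1 n, ((if -4*(j:ℤ)+n+6 = k then ((-1:ℤ)^j) else 0)
      + (if -4*(j:ℤ)+n-2 = k then ((-1:ℤ)^j) else 0)) := by
  classical
  rw [Pbar_eq]
  rw [AddMonoidAlgebra.coeff_add, AddMonoidAlgebra.coeff_sum, Finsupp.add_apply, Finsupp.finset_sum_apply]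
  simp only [AddMonoidAlgebra.coeff_add, AddMonoidAlgebra.coeff_single, Finsupp.add_apply, Finsupp.single_apply]

lemma hi_P (n : ℕ) (hn : 1 ≤ n) : HiCoeff (P n) (3*(n:ℤ) + 2) ((-1)^n) := by
  refine ⟨?_, pow_ne_zero _ (by norm_num), fun k hk => ?_⟩
  · show (P n).coeff _ = _
    rw [coeff_P, if_neg (by omega), Finset.sum_eq_single n
      (fun j hj hne => ?_) (fun h => absurd (Finset.mem_Icc.mpr ⟨hn, le_refl n⟩) h)]
    · rw [if_pos (by ring), if_neg (by omega)]; ring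
    · simp only [Finset.mem_Icc] at hj
      rw [if_neg (by omega), if_neg (by omega)]; ring
  · show (P n).coeff _ = _
    rw [coeff_P, if_neg (by omega), Finset.sum_eq_zero (fun j hj => ?_)]
    · ring
    · simp only [Finset.mem_Icc] at hj
      rw [if_neg (by omega), if_neg (by omega)]; ring

lemma lo_P (n : ℕ) (hn : 1 ≤ n) : LoCoeff (P n) (-(n:ℤ) - 6) 1 := by
  refine ⟨?_, one_ne_zero, fun k hk => ?_⟩
  · show (P n).coeff _ = _
    rw [coeff_P, if_pos rfl, Finset.sum_eq_zero (fun j hj => ?_)]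
    · ring
    · simp only [Finset.mem_Icc] at hj
      rw [if_neg (by omega), if_neg (by omega)]; ring
  · show (P n).coeff _ = _
    rw [coeff_P, if_neg (by omega), Finset.sum_eq_zero (fun j hj => ?_)]
    · ring
    · simp only [Finset.mem_Icc] at hj
      rw [if_neg (by omega), if_neg (by omega)]; ring

lemma hi_Pbar (n : ℕ) (hn : 1 ≤ n) : HiCoeff (Pbar n) ((n:ℤ) + 6) 1 := by
  refine ⟨?_, one_ne_zero, fun k hk => ?_⟩
  · show (Pbar n).coeff _ = _
    rw [coeff_Pbar, if_pos rfl, Finset.sum_eq_zero (fun j hj => ?_)]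
    · ring
    · simp only [Finset.mem_Icc] at hj
      rw [if_neg (by omega), if_neg (by omega)]; ring
  · show (Pbar n).coeff _ = _
    rw [coeff_Pbar, if_neg (by omega), Finset.sum_eq_zero (fun j hj => ?_)]
    · ring
    · simp only [Finset.mem_Icc] at hj
      rw [if_neg (by omega), if_neg (by omega)]; ring

lemma lo_Pbar (n : ℕ) (hn : 1 ≤ n) : LoCoeff (Pbar n) (-3*(n:ℤ) - 2) ((-1)^n) := by
  refine ⟨?_, pow_ne_zero _ (by norm_num), fun k hk => ?_⟩
  · show (Pbar n).coeff _ = _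
    rw [coeff_Pbar, if_neg (by omega), Finset.sum_eq_single n
      (fun j hj hne => ?_) (fun h => absurd (Finset.mem_Icc.mpr ⟨hn, le_refl n⟩) h)]
    · rw [if_neg (by omega), if_pos (by ring)]; ring
    · simp only [Finset.mem_Icc] at hj
      rw [if_neg (by omega), if_neg (by omega)]; ring
  · show (Pbar n).coeff _ = _
    rw [coeff_Pbar, if_neg (by omega), Finset.sum_eq_zero (fun j hj => ?_)]
    · ring
    · simp only [Finset.mem_Icc] at hj
      rw [if_neg (by omega), if_neg (by omega)]; ring

theorem stmt_0' (n : ℕ) (hn : 1 ≤ n) :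
    HiCoeff (P n) (3*(n:ℤ) + 2) ((-1)^n) ∧
    LoCoeff (P n) (-(n:ℤ) - 6) 1 ∧
    HiCoeff (Pbar n) ((n:ℤ) + 6) 1 ∧
    LoCoeff (Pbar n) (-3*(n:ℤ) - 2) ((-1)^n) ∧
    IsHi (P n * Pbar n) (4*(n:ℤ) + 8) ∧
    IsLo (P n * Pbar n) (-4*(n:ℤ) - 8) := by
  obtain ⟨hP1, hP2, hP3⟩ := hi_P n hn
  obtain ⟨lP1, lP2, lP3⟩ := lo_P n hn
  obtain ⟨hQ1, hQ2, hQ3⟩ := hi_Pbar n hn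
  obtain ⟨lQ1, lQ2, lQ3⟩ := lo_Pbar n hn
  refine ⟨hi_P n hn, lo_P n hn, hi_Pbar n hn, lo_Pbar n hn, ?_, ?_⟩
  · obtain ⟨he, hz⟩ := hi_mul hP3 hQ3
    have hd : (4*(n:ℤ) + 8) = (3*(n:ℤ) + 2) + ((n:ℤ) + 6) := by ring
    constructor
    · show (P n * Pbar n).coeff _ ≠ 0
      rw [hd, he]
      simp only [coeffA] at hP1 hQ1
      rw [hP1, hQ1, mul_one]
      exact hP2
    · intro k hk
      exact hz k (by omega)
  · obtain ⟨he, hz⟩ := lo_mul lP3 lQ3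
    have hd : (-4*(n:ℤ) - 8) = (-(n:ℤ) - 6) + (-3*(n:ℤ) - 2) := by ring
    constructor
    · show (P n * Pbar n).coeff _ ≠ 0
      rw [hd, he]
      simp only [coeffA] at lP1 lQ1
      rw [lP1, lQ1, one_mul]
      exact lQ2
    · intro k hk
      exact hz k (by omega)

/-- extreme exponents and coefficients of P(n), P̄(n), and their product. -/
theorem stmt_0 (n : ℕ) (hn : 1 ≤ n) :
    HiCoeff (P n) (3*(n:ℤ) + 2) ((-1)^n) ∧
    LoCoeff (P n) (-(n:ℤ) - 6) 1 ∧
    HiCoeff (Pbar n) ((n:ℤ) + 6) 1 ∧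
    LoCoeff (Pbar n) (-3*(n:ℤ) - 2) ((-1)^n) ∧
    IsHi (P n * Pbar n) (4*(n:ℤ) + 8) ∧
    IsLo (P n * Pbar n) (-4*(n:ℤ) - 8) := by
  exact stmt_0' n hn
end

section
/- Let j ≥ 1 be an integer. Then the Laurent polynomial N(j) has highest exponent h(N(j)) = 3j+6, where the coefficient of A^{3j+6} is (−1)^{j+1}, and lowest exponent ℓ(N(j)) = −j−6, where the coefficient of A^{−j−6} is 1. -/
open LaurentPolynomial Finset

lemma Tsing (n : ℤ) : (T n : LaurentPolynomial ℤ) = AddMonoidAlgebra.single n 1 := rfl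

lemma negsing (a : ℤ) (r : ℤ) :
    -(AddMonoidAlgebra.single a r : LaurentPolynomial ℤ) = AddMonoidAlgebra.single a (-r) :=
  (AddMonoidAlgebra.single_neg a r).symm

lemma twosing : (2 : LaurentPolynomial ℤ) = AddMonoidAlgebra.single (0:ℤ) (2:ℤ) := by
  have : (2 : LaurentPolynomial ℤ) = 1 + 1 := by norm_num
  rw [this, AddMonoidAlgebra.one_def, ← AddMonoidAlgebra.single_add]; norm_num

lemma negonesing : (-1 : LaurentPolynomial ℤ) = AddMonoidAlgebra.single (0:ℤ) (-1:ℤ) := by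
  rw [show (-1 : LaurentPolynomial ℤ) = -(AddMonoidAlgebra.single 0 1) from by
    rw [← AddMonoidAlgebra.one_def], negsing]

lemma appAdd (f g : LaurentPolynomial ℤ) (m : ℤ) : (f+g).coeff m = f.coeff m + g.coeff m := rfl

lemma appSum (s : Finset ℕ) (f : ℕ → LaurentPolynomial ℤ) (m : ℤ) :
    (∑ i ∈ s, f i).coeff m = ∑ i ∈ s, (f i).coeff m := by
  rw [AddMonoidAlgebra.coeff_sum, Finset.sum_apply']

lemma appSingle (a r m : ℤ) :
    (AddMonoidAlgebra.single a r : LaurentPolynomial ℤ).coeff m = if a = m then r else 0 :=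
  Finsupp.single_apply

set_option maxHeartbeats 1000000 in
set_option linter.unreachableTactic false in
set_option linter.unusedTactic false in
lemma coeffN (j : ℕ) (m : ℤ) : coeffA (N j) m =
    (if 6 + (j:ℤ)*3 = m then (-1)^(j+1) else 0) + (if -6 + (j:ℤ)*3 = m then (-1)^(j+1) else 0)
    + ((if 6 - (j:ℤ) = m then 1 else 0) + (if -2 - (j:ℤ) = m then 1 else 0) + (if 2 - (j:ℤ) = m then -2 else 0)
    + ∑ x ∈ Finset.range (j+1),
       ((if 2 + (4*(x:ℤ) - j) = m then (-1)^x else 0) + (if -6 + (4*(x:ℤ) - j) = m then (-1)^x else 0)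
         + (if -2 + (4*(x:ℤ) - j) = m then (-1)^(x+1)*2 else 0))) := by
  simp only [coeffA, N, Q, Tsing, sub_eq_add_neg, negonesing, negsing, twosing, neg_add_rev,
    AddMonoidAlgebra.single_pow, AddMonoidAlgebra.single_mul_single, add_mul, mul_add,
    Finset.mul_sum, Finset.sum_mul, one_mul, mul_one, neg_neg, smul_zero, smul_eq_mul,
    appAdd, appSum, appSingle]
  norm_num [pow_succ]
  congr 1 <;> [skip; (congr 1; funext x)] <;> ring_nf <;> norm_num [pow_succ]

/-- N(j) has h = 3j+6 with coefficient (−1)^{j+1}, and ℓ = −j−6 with coefficient 1. -/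
theorem stmt_3 (j : ℕ) (hj : 1 ≤ j) :
    HiCoeff (N j) (3*(j:ℤ) + 6) ((-1)^(j+1)) ∧
    LoCoeff (N j) (-(j:ℤ) - 6) 1 := by
  have hj' : (1:ℤ) ≤ (j:ℤ) := by exact_mod_cast hj
  refine ⟨⟨?_, pow_ne_zero _ (by norm_num), ?_⟩, ?_, one_ne_zero, ?_⟩
  · rw [coeffN, if_pos (by ring), if_neg (by omega), if_neg (by omega), if_neg (by omega),
      if_neg (by omega), Finset.sum_eq_zero]
    · ring
    · intro x hx
      have hx' := Finset.mem_range.mp hx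
      have hx'' : (x:ℤ) ≤ (j:ℤ) := by exact_mod_cast Nat.lt_succ_iff.mp hx'
      rw [if_neg (by omega), if_neg (by omega), if_neg (by omega)]; ring
  · intro k hk
    rw [coeffN, if_neg (by omega), if_neg (by omega), if_neg (by omega), if_neg (by omega),
      if_neg (by omega), Finset.sum_eq_zero]
    · ring
    · intro x hx
      have hx'' : (x:ℤ) ≤ (j:ℤ) := by exact_mod_cast Nat.lt_succ_iff.mp (Finset.mem_range.mp hx)
      rw [if_neg (by omega), if_neg (by omega), if_neg (by omega)]; ring
  · rw [coeffN, if_neg (by omega), if_neg (by omega), if_neg (by omega), if_neg (by omega),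
      if_neg (by omega),
      Finset.sum_eq_single_of_mem 0 (Finset.mem_range.mpr (by omega))]
    · norm_num
      omega
    · intro x hx hx0
      have hx1 : (1:ℤ) ≤ (x:ℤ) := by exact_mod_cast Nat.one_le_iff_ne_zero.mpr hx0
      rw [if_neg (by omega), if_neg (by omega), if_neg (by omega)]; ring
  · intro k hk
    rw [coeffN, if_neg (by omega), if_neg (by omega), if_neg (by omega), if_neg (by omega),
      if_neg (by omega), Finset.sum_eq_zero]
    · ring
    · intro x hx
      have hx1 : (0:ℤ) ≤ (x:ℤ) := Int.natCast_nonneg x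
      rw [if_neg (by omega), if_neg (by omega), if_neg (by omega)]; ring
end

section
/- Let n ≥ 2 be an integer and set W(n) = (−A⁶−A⁻⁶)·N(n) + (−A⁴−A⁻⁴+2)·A⁶·P(n) in ℤ[A, A⁻¹]. Then the terms of highest degree in the two summands cancel, and h(W(n)) = 3n+8, ℓ(W(n)) = −n−12, so that span(W(n)) = 4n+20; in particular span(W(n)) > 16. -/
open LaurentPolynomial Finset

/- ===== auxiliary machinery ===== -/
noncomputable abbrev LPZ := LaurentPolynomial ℤ

lemma lpCap (c : ℤ) (f : LPZ) (k : ℤ) : (C c * f).coeff k = c * f.coeff k :=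
  AddMonoidAlgebra.coeff_single_zero_mul f c k

lemma lpTap (e k : ℤ) : (T e : LPZ).coeff k = if e = k then 1 else 0 := by
  exact T_apply k e

lemma lpAdd (f g : LPZ) (k : ℤ) : (f + g).coeff k = f.coeff k + g.coeff k := rfl
lemma lpSub (f g : LPZ) (k : ℤ) : (f - g).coeff k = f.coeff k - g.coeff k := rfl
lemma lpSum {α : Type} (s : Finset α) (f : α → LPZ) (k : ℤ) :
    (∑ i ∈ s, f i).coeff k = ∑ i ∈ s, (f i).coeff k := by
  rw [AddMonoidAlgebra.coeff_sum, Finset.sum_apply']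

lemma negpow (m : ℕ) : ((-1 : LPZ))^m = C ((-1)^m) := by
  rw [map_pow, map_neg, map_one]

lemma exp1 (e : ℤ) : (-T 6 - T (-6) : LPZ) * ((-T 4 - T (-4) + 2) * T e) =
    T (e+10) + T (e+2) + T (e-2) + T (e-10) + C (-2) * T (e+6) + C (-2) * T (e-6) := by
  rw [show e+10 = (e+4)+6 by ring, show e+2 = (e+(-4))+6 by ring,
      show e-2 = (e+4)+(-6) by ring, show e-10 = (e+(-4))+(-6) by ring,
      show e-6 = e+(-6) by ring, show (C (-2) : LPZ) = -2 by simp]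
  simp only [T_add]; ring

lemma exp2 (e : ℤ) : (-T 4 - T (-4) + 2 : LPZ) * T 6 * ((T 4 + T (-4)) * T e) =
    C (-1) * T (e+14) + C 2 * T (e+10) + C (-2) * T (e+6) + C 2 * T (e+2) + C (-1) * T (e-2) := by
  rw [show e+14 = ((e+4)+4)+6 by ring, show e+10 = (e+4)+6 by ring,
      show e+6 = ((e+4)+(-4))+6 by ring, show e+2 = (e+(-4))+6 by ring,
      show e-2 = ((e+(-4))+(-4))+6 by ring,
      show (C (-1) : LPZ) = -1 by simp, show (C (-2) : LPZ) = -2 by simp,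
      show (C 2 : LPZ) = 2 by simp]
  simp only [T_add]; ring

lemma exp3 (e : ℤ) : (-T 4 - T (-4) + 2 : LPZ) * T 6 * T e =
    C (-1) * T (e+10) + C (-1) * T (e+2) + C 2 * T (e+6) := by
  rw [show e+10 = (e+4)+6 by ring, show e+2 = (e+(-4))+6 by ring,
      show (C (-1) : LPZ) = -1 by simp, show (C 2 : LPZ) = 2 by simp]
  simp only [T_add]; ring

lemma exp0 (n : ℕ) : (-T 6 - T (-6) : LPZ) * ((-T 6 - T (-6)) * (-T 3)^n) =
    C ((-1:ℤ)^n) * T (3*n+12) + C (2*(-1:ℤ)^n) * T (3*n) + C ((-1:ℤ)^n) * T (3*n-12) := by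
  rw [show (-T 3 : LPZ) = (-1) * T 3 by ring, mul_pow, T_pow, negpow,
      show (3*(n:ℤ)+12) = ((↑n*3+6)+6) by ring,
      show (3*(n:ℤ)-12) = ((↑n*3+(-6))+(-6)) by ring,
      show (3*(n:ℤ)) = ((↑n*3+6)+(-6)) by ring,
      show (C (2*(-1:ℤ)^n) : LPZ) = 2 * C ((-1)^n) by simp]
  simp only [T_add]; ring

lemma key (n : ℕ) : (-T 6 - T (-6)) * N n + (-T 4 - T (-4) + 2) * T 6 * P n =
    (C ((-1:ℤ)^n) * T (3*(n:ℤ)+12) + C (2*(-1:ℤ)^n) * T (3*(n:ℤ)) + C ((-1:ℤ)^n) * T (3*(n:ℤ)-12))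
    - (T ((2-(n:ℤ))+10) + T ((2-(n:ℤ))+2) + T ((2-(n:ℤ))-2) + T ((2-(n:ℤ))-10)
        + C (-2) * T ((2-(n:ℤ))+6) + C (-2) * T ((2-(n:ℤ))-6))
    + ∑ j ∈ Finset.range (n+1), C ((-1:ℤ)^(j+1)) *
        (T ((4*(j:ℤ)-n-2)+10) + T ((4*(j:ℤ)-n-2)+2) + T ((4*(j:ℤ)-n-2)-2) + T ((4*(j:ℤ)-n-2)-10)
          + C (-2) * T ((4*(j:ℤ)-n-2)+6) + C (-2) * T ((4*(j:ℤ)-n-2)-6))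
    + (C (-1) * T ((-(n:ℤ)-6)+10) + C (-1) * T ((-(n:ℤ)-6)+2) + C 2 * T ((-(n:ℤ)-6)+6))
    + ∑ j ∈ Finset.Icc 1 n, C ((-1:ℤ)^j) *
        (C (-1) * T ((4*(j:ℤ)-n-2)+14) + C 2 * T ((4*(j:ℤ)-n-2)+10) + C (-2) * T ((4*(j:ℤ)-n-2)+6)
          + C 2 * T ((4*(j:ℤ)-n-2)+2) + C (-1) * T ((4*(j:ℤ)-n-2)-2)) := by
  have hS1 : (-T 6 - T (-6) : LPZ) * ((-T 4 - T (-4) + 2) *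
      ∑ k ∈ Finset.range (n+1), (-1:LPZ)^(k+1) * T (4*(k:ℤ)-n-2)) =
      ∑ j ∈ Finset.range (n+1), C ((-1:ℤ)^(j+1)) *
        (T ((4*(j:ℤ)-n-2)+10) + T ((4*(j:ℤ)-n-2)+2) + T ((4*(j:ℤ)-n-2)-2) + T ((4*(j:ℤ)-n-2)-10)
          + C (-2) * T ((4*(j:ℤ)-n-2)+6) + C (-2) * T ((4*(j:ℤ)-n-2)-6)) := by
    rw [Finset.mul_sum, Finset.mul_sum]
    refine Finset.sum_congr rfl fun j _ => ?_
    rw [negpow]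
    calc (-T 6 - T (-6) : LPZ) * ((-T 4 - T (-4) + 2) * (C ((-1:ℤ)^(j+1)) * T (4*(j:ℤ)-n-2)))
        = C ((-1:ℤ)^(j+1)) * ((-T 6 - T (-6)) * ((-T 4 - T (-4) + 2) * T (4*(j:ℤ)-n-2))) := by
          ring
      _ = _ := by rw [exp1]
  have hS2 : (-T 4 - T (-4) + 2 : LPZ) * T 6 * ((T 4 + T (-4)) *
      ∑ k ∈ Finset.Icc 1 n, (-1:LPZ)^k * T (4*(k:ℤ)-n-2)) =
      ∑ j ∈ Finset.Icc 1 n, C ((-1:ℤ)^j) *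
        (C (-1) * T ((4*(j:ℤ)-n-2)+14) + C 2 * T ((4*(j:ℤ)-n-2)+10) + C (-2) * T ((4*(j:ℤ)-n-2)+6)
          + C 2 * T ((4*(j:ℤ)-n-2)+2) + C (-1) * T ((4*(j:ℤ)-n-2)-2)) := by
    rw [Finset.mul_sum, Finset.mul_sum]
    refine Finset.sum_congr rfl fun j _ => ?_
    rw [negpow]
    calc (-T 4 - T (-4) + 2 : LPZ) * T 6 * ((T 4 + T (-4)) * (C ((-1:ℤ)^j) * T (4*(j:ℤ)-n-2)))
        = C ((-1:ℤ)^j) * ((-T 4 - T (-4) + 2) * T 6 * ((T 4 + T (-4)) * T (4*(j:ℤ)-n-2))) := by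
          ring
      _ = _ := by rw [exp2]
  simp only [N, Q, P]
  rw [← hS1, ← hS2, ← exp1 (2-(n:ℤ)), ← exp3 (-(n:ℤ)-6), ← exp0 n]
  ring

/-- for n ≥ 2, W(n) = (−A⁶−A⁻⁶)·N(n) + (−A⁴−A⁻⁴+2)·A⁶·P(n)
has h = 3n+8, ℓ = −n−12, span 4n+20 > 16. -/
theorem stmt_4 (n : ℕ) (hn : 2 ≤ n)
    (W : LaurentPolynomial ℤ)
    (hW : W = (-T 6 - T (-6)) * N n + (-T 4 - T (-4) + 2) * T 6 * P n) :
    IsHi W (3*(n:ℤ) + 8) ∧ IsLo W (-(n:ℤ) - 12) ∧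
    (3*(n:ℤ) + 8) - (-(n:ℤ) - 12) = 4*(n:ℤ) + 20 ∧
    4*(n:ℤ) + 20 > 16 := by
  obtain ⟨m, rfl⟩ : ∃ m, n = m + 2 := ⟨n - 2, by omega⟩
  rw [key] at hW
  -- highest coefficient
  have h1 : coeffA W (3*((m+2:ℕ):ℤ) + 8) = 2*(-1)^m := by
    simp only [coeffA, hW, lpAdd, lpSub, lpSum, lpCap, lpTap]
    have hv1 : ∀ b ∈ Finset.range (m+2+1), b ≠ m+2 →
        ((-1:ℤ)^(b+1) * ((if 4 * (b:ℤ) - ((m+2:ℕ):ℤ) - 2 + 10 = 3 * ((m+2:ℕ):ℤ) + 8 then (1:ℤ) else 0) + (if 4 * (b:ℤ) - ((m+2:ℕ):ℤ) - 2 + 2 = 3 * ((m+2:ℕ):ℤ) + 8 then 1 else 0) + (if 4 * (b:ℤ) - ((m+2:ℕ):ℤ) - 2 - 2 = 3 * ((m+2:ℕ):ℤ) + 8 then 1 else 0) + (if 4 * (b:ℤ) - ((m+2:ℕ):ℤ) - 2 - 10 = 3 * ((m+2:ℕ):ℤ) + 8 then 1 else 0) + -2 * (if 4 * (b:ℤ)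 - ((m+2:ℕ):ℤ) - 2 + 6 = 3 * ((m+2:ℕ):ℤ) + 8 then 1 else 0) + -2 * (if 4 * (b:ℤ) - ((m+2:ℕ):ℤ) - 2 - 6 = 3 * ((m+2:ℕ):ℤ) + 8 then 1 else 0))) = 0 := by
      intro b hb hne
      rw [Finset.mem_range] at hb
      split_ifs <;> first | (exfalso; omega) | ring
    have hv2 : ∀ b ∈ Finset.Icc 1 (m+2), b ∉ ({m+1, m+2} : Finset ℕ) →
        ((-1:ℤ)^b * (-1 * (if 4 * (b:ℤ) - ((m+2:ℕ):ℤ) - 2 + 14 = 3 * ((m+2:ℕ):ℤ) + 8 then (1:ℤ) else 0) + 2 * (if 4 * (b:ℤ) - ((m+2:ℕ):ℤ) - 2 + 10 = 3 * ((m+2:ℕ):ℤ) + 8 then 1 else 0) + -2 * (if 4 * (b:ℤ) - ((m+2:ℕ):ℤ) - 2 + 6 = 3 * ((m+2:ℕ):ℤ) + 8 then 1 else 0) + 2 * (if 4 * (b:ℤ) - ((m+2:ℕ):ℤ) - 2 + 2 = 3 * ((m+2:ℕ):ℤ) + 8 then 1 else 0) + -1 * (if 4 * (b:ℤ) - ((m+2:ℕ):ℤ)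 - 2 - 2 = 3 * ((m+2:ℕ):ℤ) + 8 then 1 else 0))) = 0 := by
      intro b hb hne
      rw [Finset.mem_Icc] at hb
      simp only [Finset.mem_insert, Finset.mem_singleton, not_or] at hne
      split_ifs <;> first | (exfalso; omega) | ring
    have hsub : ({m+1, m+2} : Finset ℕ) ⊆ Finset.Icc 1 (m+2) := by
      intro x hx
      simp only [Finset.mem_insert, Finset.mem_singleton] at hx
      rw [Finset.mem_Icc]; omega
    rw [Finset.sum_eq_single_of_mem (m+2) (Finset.self_mem_range_succ (m+2)) hv1,
        ← Finset.sum_subset hsub hv2, Finset.sum_pair (by omega : m+1 ≠ m+2)]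
    rw [if_neg (by omega : ¬(3 * ((m+2:ℕ):ℤ) + 12 = 3 * ((m+2:ℕ):ℤ) + 8)),
        if_neg (by omega : ¬(3 * ((m+2:ℕ):ℤ) = 3 * ((m+2:ℕ):ℤ) + 8)),
        if_neg (by omega : ¬(3 * ((m+2:ℕ):ℤ) - 12 = 3 * ((m+2:ℕ):ℤ) + 8)),
        if_neg (by omega : ¬(2 - ((m+2:ℕ):ℤ) + 10 = 3 * ((m+2:ℕ):ℤ) + 8)),
        if_neg (by omega : ¬(2 - ((m+2:ℕ):ℤ) + 2 = 3 * ((m+2:ℕ):ℤ) + 8)),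
        if_neg (by omega : ¬(2 - ((m+2:ℕ):ℤ) - 2 = 3 * ((m+2:ℕ):ℤ) + 8)),
        if_neg (by omega : ¬(2 - ((m+2:ℕ):ℤ) - 10 = 3 * ((m+2:ℕ):ℤ) + 8)),
        if_neg (by omega : ¬(2 - ((m+2:ℕ):ℤ) + 6 = 3 * ((m+2:ℕ):ℤ) + 8)),
        if_neg (by omega : ¬(2 - ((m+2:ℕ):ℤ) - 6 = 3 * ((m+2:ℕ):ℤ) + 8)),
        if_neg (by omega : ¬(-((m+2:ℕ):ℤ) - 6 + 10 = 3 * ((m+2:ℕ):ℤ) + 8)),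
        if_neg (by omega : ¬(-((m+2:ℕ):ℤ) - 6 + 2 = 3 * ((m+2:ℕ):ℤ) + 8)),
        if_neg (by omega : ¬(-((m+2:ℕ):ℤ) - 6 + 6 = 3 * ((m+2:ℕ):ℤ) + 8))]
    rw [if_pos (by omega : (4 * ((m+2:ℕ):ℤ) - ((m+2:ℕ):ℤ) - 2 + 10 = 3 * ((m+2:ℕ):ℤ) + 8)),
        if_neg (by omega : ¬(4 * ((m+2:ℕ):ℤ) - ((m+2:ℕ):ℤ) - 2 + 2 = 3 * ((m+2:ℕ):ℤ) + 8)),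
        if_neg (by omega : ¬(4 * ((m+2:ℕ):ℤ) - ((m+2:ℕ):ℤ) - 2 - 2 = 3 * ((m+2:ℕ):ℤ) + 8)),
        if_neg (by omega : ¬(4 * ((m+2:ℕ):ℤ) - ((m+2:ℕ):ℤ) - 2 - 10 = 3 * ((m+2:ℕ):ℤ) + 8)),
        if_neg (by omega : ¬(4 * ((m+2:ℕ):ℤ) - ((m+2:ℕ):ℤ) - 2 + 6 = 3 * ((m+2:ℕ):ℤ) + 8)),
        if_neg (by omega : ¬(4 * ((m+2:ℕ):ℤ) - ((m+2:ℕ):ℤ) - 2 - 6 = 3 * ((m+2:ℕ):ℤ) + 8)),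
        if_pos (by omega : (4 * ((m+1:ℕ):ℤ) - ((m+2:ℕ):ℤ) - 2 + 14 = 3 * ((m+2:ℕ):ℤ) + 8)),
        if_neg (by omega : ¬(4 * ((m+1:ℕ):ℤ) - ((m+2:ℕ):ℤ) - 2 + 10 = 3 * ((m+2:ℕ):ℤ) + 8)),
        if_neg (by omega : ¬(4 * ((m+1:ℕ):ℤ) - ((m+2:ℕ):ℤ) - 2 + 6 = 3 * ((m+2:ℕ):ℤ) + 8)),
        if_neg (by omega : ¬(4 * ((m+1:ℕ):ℤ) - ((m+2:ℕ):ℤ) - 2 + 2 = 3 * ((m+2:ℕ):ℤ) + 8)),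
        if_neg (by omega : ¬(4 * ((m+1:ℕ):ℤ) - ((m+2:ℕ):ℤ) - 2 - 2 = 3 * ((m+2:ℕ):ℤ) + 8)),
        if_neg (by omega : ¬(4 * ((m+2:ℕ):ℤ) - ((m+2:ℕ):ℤ) - 2 + 14 = 3 * ((m+2:ℕ):ℤ) + 8))]
    ring
  have h2 : ∀ k : ℤ, 3*((m+2:ℕ):ℤ) + 8 < k → coeffA W k = 0 := by
    intro k hk
    simp only [coeffA, hW, lpAdd, lpSub, lpSum, lpCap, lpTap]
    have hv1 : ∀ b ∈ Finset.range (m+2+1),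
        ((-1:ℤ)^(b+1) * ((if 4 * (b:ℤ) - ((m+2:ℕ):ℤ) - 2 + 10 = k then (1:ℤ) else 0) + (if 4 * (b:ℤ) - ((m+2:ℕ):ℤ) - 2 + 2 = k then 1 else 0) + (if 4 * (b:ℤ) - ((m+2:ℕ):ℤ) - 2 - 2 = k then 1 else 0) + (if 4 * (b:ℤ) - ((m+2:ℕ):ℤ) - 2 - 10 = k then 1 else 0) + -2 * (if 4 * (b:ℤ) - ((m+2:ℕ):ℤ) - 2 + 6 = k then 1 else 0) + -2 * (if 4 * (b:ℤ) - ((m+2:ℕ):ℤ) - 2 - 6 = k then 1 else 0))) = 0 := by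
      intro b hb
      rw [Finset.mem_range] at hb
      split_ifs <;> first | (exfalso; omega) | ring
    have hv2 : ∀ b ∈ Finset.Icc 1 (m+2), b ≠ m+2 →
        ((-1:ℤ)^b * (-1 * (if 4 * (b:ℤ) - ((m+2:ℕ):ℤ) - 2 + 14 = k then (1:ℤ) else 0) + 2 * (if 4 * (b:ℤ) - ((m+2:ℕ):ℤ) - 2 + 10 = k then 1 else 0) + -2 * (if 4 * (b:ℤ) - ((m+2:ℕ):ℤ) - 2 + 6 = k then 1 else 0) + 2 * (if 4 * (b:ℤ) - ((m+2:ℕ):ℤ) - 2 + 2 = k then 1 else 0) + -1 * (if 4 * (b:ℤ) - ((m+2:ℕ):ℤ) - 2 - 2 = k then 1 else 0))) = 0 := by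
      intro b hb hne
      rw [Finset.mem_Icc] at hb
      split_ifs <;> first | (exfalso; omega) | ring
    rw [Finset.sum_eq_zero hv1,
        Finset.sum_eq_single_of_mem (m+2) (Finset.mem_Icc.mpr (by omega)) hv2]
    rw [if_neg (by omega : ¬(3 * ((m+2:ℕ):ℤ) = k)),
        if_neg (by omega : ¬(3 * ((m+2:ℕ):ℤ) - 12 = k)),
        if_neg (by omega : ¬(2 - ((m+2:ℕ):ℤ) + 10 = k)),
        if_neg (by omega : ¬(2 - ((m+2:ℕ):ℤ) + 2 = k)),
        if_neg (by omega : ¬(2 - ((m+2:ℕ):ℤ) - 2 = k)),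
        if_neg (by omega : ¬(2 - ((m+2:ℕ):ℤ) - 10 = k)),
        if_neg (by omega : ¬(2 - ((m+2:ℕ):ℤ) + 6 = k)),
        if_neg (by omega : ¬(2 - ((m+2:ℕ):ℤ) - 6 = k)),
        if_neg (by omega : ¬(-((m+2:ℕ):ℤ) - 6 + 10 = k)),
        if_neg (by omega : ¬(-((m+2:ℕ):ℤ) - 6 + 2 = k)),
        if_neg (by omega : ¬(-((m+2:ℕ):ℤ) - 6 + 6 = k))]
    rw [if_neg (by omega : ¬(4 * ((m+2:ℕ):ℤ) - ((m+2:ℕ):ℤ) - 2 + 10 = k)),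
        if_neg (by omega : ¬(4 * ((m+2:ℕ):ℤ) - ((m+2:ℕ):ℤ) - 2 + 6 = k)),
        if_neg (by omega : ¬(4 * ((m+2:ℕ):ℤ) - ((m+2:ℕ):ℤ) - 2 + 2 = k)),
        if_neg (by omega : ¬(4 * ((m+2:ℕ):ℤ) - ((m+2:ℕ):ℤ) - 2 - 2 = k))]
    rw [show 4 * ((m+2:ℕ):ℤ) - ((m+2:ℕ):ℤ) - 2 + 14 = 3 * ((m+2:ℕ):ℤ) + 12 by push_cast; ring]
    by_cases hc : 3 * ((m+2:ℕ):ℤ) + 12 = k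
    · rw [if_pos hc]; ring
    · rw [if_neg hc]; ring
  have h3 : coeffA W (-((m+2:ℕ):ℤ) - 12) = -1 := by
    simp only [coeffA, hW, lpAdd, lpSub, lpSum, lpCap, lpTap]
    have hv1 : ∀ b ∈ Finset.range (m+2+1), b ≠ 0 →
        ((-1:ℤ)^(b+1) * ((if 4 * (b:ℤ) - ((m+2:ℕ):ℤ) - 2 + 10 = -((m+2:ℕ):ℤ) - 12 then (1:ℤ) else 0) + (if 4 * (b:ℤ) - ((m+2:ℕ):ℤ) - 2 + 2 = -((m+2:ℕ):ℤ) - 12 then 1 else 0) + (if 4 * (b:ℤ) - ((m+2:ℕ):ℤ) - 2 - 2 = -((m+2:ℕ):ℤ) - 12 then 1 else 0) + (if 4 * (b:ℤ) - ((m+2:ℕ):ℤ) - 2 - 10 = -((m+2:ℕ):ℤ) - 12 then 1 else 0) + -2 * (if 4 * (b:ℤ) - ((m+2:ℕ):ℤ) - 2 + 6 = -((m+2:ℕ):ℤ) - 12 then 1 else 0) + -2 * (if 4 * (b:ℤ) - ((m+2:ℕ):ℤ) - 2 - 6 = -((m+2:ℕ):ℤ) - 12 then 1 else 0))) = 0 :=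 by
      intro b hb hne
      rw [Finset.mem_range] at hb
      split_ifs <;> first | (exfalso; omega) | ring
    have hv2 : ∀ b ∈ Finset.Icc 1 (m+2),
        ((-1:ℤ)^b * (-1 * (if 4 * (b:ℤ) - ((m+2:ℕ):ℤ) - 2 + 14 = -((m+2:ℕ):ℤ) - 12 then (1:ℤ) else 0) + 2 * (if 4 * (b:ℤ) - ((m+2:ℕ):ℤ) - 2 + 10 = -((m+2:ℕ):ℤ) - 12 then 1 else 0) + -2 * (if 4 * (b:ℤ) - ((m+2:ℕ):ℤ) - 2 + 6 = -((m+2:ℕ):ℤ) - 12 then 1 else 0) + 2 * (if 4 * (b:ℤ) - ((m+2:ℕ):ℤ) - 2 + 2 = -((m+2:ℕ):ℤ) - 12 then 1 else 0) + -1 * (if 4 * (b:ℤ) - ((m+2:ℕ):ℤ) - 2 - 2 = -((m+2:ℕ):ℤ) - 12 then 1 else 0))) = 0 := by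
      intro b hb
      rw [Finset.mem_Icc] at hb
      split_ifs <;> first | (exfalso; omega) | ring
    rw [Finset.sum_eq_single_of_mem 0 (Finset.mem_range.mpr (by omega)) hv1,
        Finset.sum_eq_zero hv2]
    rw [if_neg (by omega : ¬(3 * ((m+2:ℕ):ℤ) + 12 = -((m+2:ℕ):ℤ) - 12)),
        if_neg (by omega : ¬(3 * ((m+2:ℕ):ℤ) = -((m+2:ℕ):ℤ) - 12)),
        if_neg (by omega : ¬(3 * ((m+2:ℕ):ℤ) - 12 = -((m+2:ℕ):ℤ) - 12)),
        if_neg (by omega : ¬(2 - ((m+2:ℕ):ℤ) + 10 = -((m+2:ℕ):ℤ) - 12)),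
        if_neg (by omega : ¬(2 - ((m+2:ℕ):ℤ) + 2 = -((m+2:ℕ):ℤ) - 12)),
        if_neg (by omega : ¬(2 - ((m+2:ℕ):ℤ) - 2 = -((m+2:ℕ):ℤ) - 12)),
        if_neg (by omega : ¬(2 - ((m+2:ℕ):ℤ) - 10 = -((m+2:ℕ):ℤ) - 12)),
        if_neg (by omega : ¬(2 - ((m+2:ℕ):ℤ) + 6 = -((m+2:ℕ):ℤ) - 12)),
        if_neg (by omega : ¬(2 - ((m+2:ℕ):ℤ) - 6 = -((m+2:ℕ):ℤ) - 12)),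
        if_neg (by omega : ¬(-((m+2:ℕ):ℤ) - 6 + 10 = -((m+2:ℕ):ℤ) - 12)),
        if_neg (by omega : ¬(-((m+2:ℕ):ℤ) - 6 + 2 = -((m+2:ℕ):ℤ) - 12)),
        if_neg (by omega : ¬(-((m+2:ℕ):ℤ) - 6 + 6 = -((m+2:ℕ):ℤ) - 12))]
    rw [if_neg (by omega : ¬(4 * ((0:ℕ):ℤ) - ((m+2:ℕ):ℤ) - 2 + 10 = -((m+2:ℕ):ℤ) - 12)),
        if_neg (by omega : ¬(4 * ((0:ℕ):ℤ) - ((m+2:ℕ):ℤ) - 2 + 2 = -((m+2:ℕ):ℤ) - 12)),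
        if_neg (by omega : ¬(4 * ((0:ℕ):ℤ) - ((m+2:ℕ):ℤ) - 2 - 2 = -((m+2:ℕ):ℤ) - 12)),
        if_pos (by omega : (4 * ((0:ℕ):ℤ) - ((m+2:ℕ):ℤ) - 2 - 10 = -((m+2:ℕ):ℤ) - 12)),
        if_neg (by omega : ¬(4 * ((0:ℕ):ℤ) - ((m+2:ℕ):ℤ) - 2 + 6 = -((m+2:ℕ):ℤ) - 12)),
        if_neg (by omega : ¬(4 * ((0:ℕ):ℤ) - ((m+2:ℕ):ℤ) - 2 - 6 = -((m+2:ℕ):ℤ) - 12))]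
    ring
  have h4 : ∀ k : ℤ, k < -((m+2:ℕ):ℤ) - 12 → coeffA W k = 0 := by
    intro k hk
    simp only [coeffA, hW, lpAdd, lpSub, lpSum, lpCap, lpTap]
    have hv1 : ∀ b ∈ Finset.range (m+2+1),
        ((-1:ℤ)^(b+1) * ((if 4 * (b:ℤ) - ((m+2:ℕ):ℤ) - 2 + 10 = k then (1:ℤ) else 0) + (if 4 * (b:ℤ) - ((m+2:ℕ):ℤ) - 2 + 2 = k then 1 else 0) + (if 4 * (b:ℤ) - ((m+2:ℕ):ℤ) - 2 - 2 = k then 1 else 0) + (if 4 * (b:ℤ) - ((m+2:ℕ):ℤ) - 2 - 10 = k then 1 else 0) + -2 * (if 4 * (b:ℤ) - ((m+2:ℕ):ℤ) - 2 + 6 = k then 1 else 0) + -2 * (if 4 * (b:ℤ) - ((m+2:ℕ):ℤ) - 2 - 6 = k then 1 else 0))) = 0 := by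
      intro b hb
      rw [Finset.mem_range] at hb
      split_ifs <;> first | (exfalso; omega) | ring
    have hv2 : ∀ b ∈ Finset.Icc 1 (m+2),
        ((-1:ℤ)^b * (-1 * (if 4 * (b:ℤ) - ((m+2:ℕ):ℤ) - 2 + 14 = k then (1:ℤ) else 0) + 2 * (if 4 * (b:ℤ) - ((m+2:ℕ):ℤ) - 2 + 10 = k then 1 else 0) + -2 * (if 4 * (b:ℤ) - ((m+2:ℕ):ℤ) - 2 + 6 = k then 1 else 0) + 2 * (if 4 * (b:ℤ) - ((m+2:ℕ):ℤ) - 2 + 2 = k then 1 else 0) + -1 * (if 4 * (b:ℤ) - ((m+2:ℕ):ℤ) - 2 - 2 = k then 1 else 0))) = 0 := by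
      intro b hb
      rw [Finset.mem_Icc] at hb
      split_ifs <;> first | (exfalso; omega) | ring
    rw [Finset.sum_eq_zero hv1, Finset.sum_eq_zero hv2]
    rw [if_neg (by omega : ¬(3 * ((m+2:ℕ):ℤ) + 12 = k)),
        if_neg (by omega : ¬(3 * ((m+2:ℕ):ℤ) = k)),
        if_neg (by omega : ¬(3 * ((m+2:ℕ):ℤ) - 12 = k)),
        if_neg (by omega : ¬(2 - ((m+2:ℕ):ℤ) + 10 = k)),
        if_neg (by omega : ¬(2 - ((m+2:ℕ):ℤ) + 2 = k)),
        if_neg (by omega : ¬(2 - ((m+2:ℕ):ℤ) - 2 = k)),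
        if_neg (by omega : ¬(2 - ((m+2:ℕ):ℤ) - 10 = k)),
        if_neg (by omega : ¬(2 - ((m+2:ℕ):ℤ) + 6 = k)),
        if_neg (by omega : ¬(2 - ((m+2:ℕ):ℤ) - 6 = k)),
        if_neg (by omega : ¬(-((m+2:ℕ):ℤ) - 6 + 10 = k)),
        if_neg (by omega : ¬(-((m+2:ℕ):ℤ) - 6 + 2 = k)),
        if_neg (by omega : ¬(-((m+2:ℕ):ℤ) - 6 + 6 = k))]
    ring
  refine ⟨⟨?_, h2⟩, ⟨?_, h4⟩, by ring, by push_cast; omega⟩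
  · rw [h1]
    rcases Nat.even_or_odd m with h | h
    · rw [h.neg_one_pow]; norm_num
    · rw [h.neg_one_pow]; norm_num
  · rw [h3]; norm_num
end

section
/- Let m ≥ 1 and n ≥ m+2 be integers and set W(n,m) = (−A⁶−A⁻⁶)·N(n−m) + (−A⁴−A⁻⁴+2)·P(n)·P̄(m) in ℤ[A, A⁻¹]. Then span(W(n,m)) > 16; in particular span(W(n,m)) ≠ 16. -/
open LaurentPolynomial Finset

section Helpers

lemma coeffA_add (y z : LaurentPolynomial ℤ) (k : ℤ) :
    coeffA (y + z) k = coeffA y k + coeffA z k := Finsupp.add_apply y.coeff z.coeff k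

lemma coeffA_neg (y : LaurentPolynomial ℤ) (k : ℤ) :
    coeffA (-y) k = -coeffA y k := Finsupp.neg_apply y.coeff k

lemma coeffA_sub (y z : LaurentPolynomial ℤ) (k : ℤ) :
    coeffA (y - z) k = coeffA y k - coeffA z k := Finsupp.sub_apply y.coeff z.coeff k

lemma coeffA_T (a k : ℤ) : coeffA (T a) k = if a = k then 1 else 0 := by
  exact T_apply k a

lemma coeffA_sum {ι : Type*} (s : Finset ι) (f : ι → LaurentPolynomial ℤ) (x : ℤ) :
    coeffA (∑ i ∈ s, f i) x = ∑ i ∈ s, coeffA (f i) x :=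
  by simp only [coeffA, AddMonoidAlgebra.coeff_sum, Finsupp.finset_sum_apply]

lemma coeffA_pow_neg_one_mul_T (k : ℕ) (a x : ℤ) :
    coeffA ((-1 : LaurentPolynomial ℤ) ^ k * T a) x = if a = x then (-1) ^ k else 0 := by
  have h : ((-1 : LaurentPolynomial ℤ)) ^ k * T a = AddMonoidAlgebra.single a ((-1 : ℤ) ^ k) := by
    rw [single_eq_C_mul_T]
    congr 1
    rw [map_pow, map_neg, map_one]
  rw [coeffA, h, AddMonoidAlgebra.coeff_single, Finsupp.single_apply]

lemma coeffA_mul_eq_zero_hi {y z : LaurentPolynomial ℤ} {d e : ℤ}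
    (hy : ∀ k, d < k → coeffA y k = 0) (hz : ∀ k, e < k → coeffA z k = 0)
    {x : ℤ} (hx : d + e < x) : coeffA (y * z) x = 0 := by
  classical
  simp only [coeffA] at *
  rw [AddMonoidAlgebra.mul_apply, Finsupp.sum]
  refine Finset.sum_eq_zero fun a ha => ?_
  rw [Finsupp.sum]
  refine Finset.sum_eq_zero fun b hb => ?_
  by_cases hab : a + b = x
  · rw [if_pos hab]
    by_cases had : d < a
    · rw [hy a had, zero_mul]
    · have : e < b := by omega
      rw [hz b this, mul_zero]
  · rw [if_neg hab]

lemma coeffA_mul_eq_zero_lo {y z : LaurentPolynomial ℤ} {d e : ℤ}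
    (hy : ∀ k, k < d → coeffA y k = 0) (hz : ∀ k, k < e → coeffA z k = 0)
    {x : ℤ} (hx : x < d + e) : coeffA (y * z) x = 0 := by
  classical
  simp only [coeffA] at *
  rw [AddMonoidAlgebra.mul_apply, Finsupp.sum]
  refine Finset.sum_eq_zero fun a ha => ?_
  rw [Finsupp.sum]
  refine Finset.sum_eq_zero fun b hb => ?_
  by_cases hab : a + b = x
  · rw [if_pos hab]
    by_cases had : a < d
    · rw [hy a had, zero_mul]
    · have : b < e := by omega
      rw [hz b this, mul_zero]
  · rw [if_neg hab]

lemma coeffA_mul_top {y z : LaurentPolynomial ℤ} {d e : ℤ}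
    (hy : ∀ k, d < k → coeffA y k = 0) (hz : ∀ k, e < k → coeffA z k = 0) :
    coeffA (y * z) (d + e) = coeffA y d * coeffA z e := by
  classical
  simp only [coeffA] at *
  rw [AddMonoidAlgebra.mul_apply, Finsupp.sum]
  rw [Finset.sum_eq_single d]
  · rw [Finsupp.sum, Finset.sum_eq_single e]
    · rw [if_pos rfl]
    · intro b hb hbe
      rw [if_neg (by omega)]
    · intro hd
      rw [if_pos rfl, Finsupp.notMem_support_iff.mp hd, mul_zero]
  · intro a ha hane
    rw [Finsupp.sum]
    refine Finset.sum_eq_zero fun b hb => ?_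
    by_cases hab : a + b = d + e
    · rw [if_pos hab]
      rcases lt_or_gt_of_ne hane with h | h
      · have hbe : e < b := by omega
        exact absurd (hz b hbe) (Finsupp.mem_support_iff.mp hb)
      · rw [hy a h, zero_mul]
    · rw [if_neg hab]
  · intro hd
    rw [Finsupp.notMem_support_iff.mp hd, Finsupp.sum]
    refine Finset.sum_eq_zero fun b hb => ?_
    rw [zero_mul, ite_self]

lemma coeffA_mul_bot {y z : LaurentPolynomial ℤ} {d e : ℤ}
    (hy : ∀ k, k < d → coeffA y k = 0) (hz : ∀ k, k < e → coeffA z k = 0) :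
    coeffA (y * z) (d + e) = coeffA y d * coeffA z e := by
  classical
  simp only [coeffA] at *
  rw [AddMonoidAlgebra.mul_apply, Finsupp.sum]
  rw [Finset.sum_eq_single d]
  · rw [Finsupp.sum, Finset.sum_eq_single e]
    · rw [if_pos rfl]
    · intro b hb hbe
      rw [if_neg (by omega)]
    · intro hd
      rw [if_pos rfl, Finsupp.notMem_support_iff.mp hd, mul_zero]
  · intro a ha hane
    rw [Finsupp.sum]
    refine Finset.sum_eq_zero fun b hb => ?_
    by_cases hab : a + b = d + e
    · rw [if_pos hab]
      rcases lt_or_gt_of_ne hane with h | h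
      · rw [hy a h, zero_mul]
      · have hbe : b < e := by omega
        exact absurd (hz b hbe) (Finsupp.mem_support_iff.mp hb)
    · rw [if_neg hab]
  · intro hd
    rw [Finsupp.notMem_support_iff.mp hd, Finsupp.sum]
    refine Finset.sum_eq_zero fun b hb => ?_
    rw [zero_mul, ite_self]

lemma HiCoeff.mul' {y z : LaurentPolynomial ℤ} {d c e c' : ℤ}
    (hy : HiCoeff y d c) (hz : HiCoeff z e c') : HiCoeff (y * z) (d + e) (c * c') := by
  obtain ⟨h1, h2, h3⟩ := hy
  obtain ⟨g1, g2, g3⟩ := hz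
  exact ⟨by rw [coeffA_mul_top h3 g3, h1, g1], mul_ne_zero h2 g2,
    fun k hk => coeffA_mul_eq_zero_hi h3 g3 hk⟩

lemma LoCoeff.mul' {y z : LaurentPolynomial ℤ} {d c e c' : ℤ}
    (hy : LoCoeff y d c) (hz : LoCoeff z e c') : LoCoeff (y * z) (d + e) (c * c') := by
  obtain ⟨h1, h2, h3⟩ := hy
  obtain ⟨g1, g2, g3⟩ := hz
  exact ⟨by rw [coeffA_mul_bot h3 g3, h1, g1], mul_ne_zero h2 g2,
    fun k hk => coeffA_mul_eq_zero_lo h3 g3 hk⟩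

lemma HiCoeff.congr' {y : LaurentPolynomial ℤ} {d c d' c' : ℤ}
    (h : HiCoeff y d c) (hd : d = d') (hc : c = c') : HiCoeff y d' c' := hd ▸ hc ▸ h

lemma LoCoeff.congr' {y : LaurentPolynomial ℤ} {d c d' c' : ℤ}
    (h : LoCoeff y d c) (hd : d = d') (hc : c = c') : LoCoeff y d' c' := hd ▸ hc ▸ h

lemma HiCoeff.add_right {y z : LaurentPolynomial ℤ} {d c : ℤ}
    (hy : HiCoeff y d c) (hz : ∀ k, d ≤ k → coeffA z k = 0) : HiCoeff (y + z) d c :=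
  ⟨by rw [coeffA_add, hy.1, hz d le_rfl, add_zero], hy.2.1,
    fun k hk => by rw [coeffA_add, hy.2.2 k hk, hz k hk.le, add_zero]⟩

lemma HiCoeff.add_left {y z : LaurentPolynomial ℤ} {d c : ℤ}
    (hz : HiCoeff z d c) (hy : ∀ k, d ≤ k → coeffA y k = 0) : HiCoeff (y + z) d c := by
  rw [add_comm]; exact hz.add_right hy

lemma LoCoeff.add_right {y z : LaurentPolynomial ℤ} {d c : ℤ}
    (hy : LoCoeff y d c) (hz : ∀ k, k ≤ d → coeffA z k = 0) : LoCoeff (y + z) d c :=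
  ⟨by rw [coeffA_add, hy.1, hz d le_rfl, add_zero], hy.2.1,
    fun k hk => by rw [coeffA_add, hy.2.2 k hk, hz k hk.le, add_zero]⟩

lemma LoCoeff.add_left {y z : LaurentPolynomial ℤ} {d c : ℤ}
    (hz : LoCoeff z d c) (hy : ∀ k, k ≤ d → coeffA y k = 0) : LoCoeff (y + z) d c := by
  rw [add_comm]; exact hz.add_right hy

lemma HiCoeff.bound_ge {y : LaurentPolynomial ℤ} {e c d : ℤ}
    (h : HiCoeff y e c) (hed : e < d) : ∀ k, d ≤ k → coeffA y k = 0 :=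
  fun k hk => h.2.2 k (lt_of_lt_of_le hed hk)

lemma LoCoeff.bound_le {y : LaurentPolynomial ℤ} {e c d : ℤ}
    (h : LoCoeff y e c) (hed : d < e) : ∀ k, k ≤ d → coeffA y k = 0 :=
  fun k hk => h.2.2 k (lt_of_le_of_lt hk hed)

lemma hiCoeff_T (a : ℤ) : HiCoeff (T a) a 1 :=
  ⟨by rw [coeffA_T, if_pos rfl], one_ne_zero,
    fun k hk => by rw [coeffA_T, if_neg (by omega)]⟩

lemma loCoeff_T (a : ℤ) : LoCoeff (T a) a 1 :=
  ⟨by rw [coeffA_T, if_pos rfl], one_ne_zero,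
    fun k hk => by rw [coeffA_T, if_neg (by omega)]⟩

end Helpers
section Sums

lemma coeffA_T_ne (a k : ℤ) (h : a ≠ k) : coeffA (T a) k = 0 := by
  rw [coeffA_T, if_neg h]

lemma hiCoeff_T4' : HiCoeff (T 4 + T (-4) : LaurentPolynomial ℤ) 4 1 :=
  (hiCoeff_T 4).add_right fun k hk => coeffA_T_ne _ _ (by omega)

lemma loCoeff_T4' : LoCoeff (T 4 + T (-4) : LaurentPolynomial ℤ) (-4) 1 :=
  (loCoeff_T (-4)).add_left fun k hk => coeffA_T_ne _ _ (by omega)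

lemma S1_bound (n : ℕ) {x : ℤ} (hx : 3 * (n : ℤ) - 2 < x ∨ x < 2 - (n : ℤ)) :
    coeffA (∑ k ∈ Finset.Icc 1 n, (-1 : LaurentPolynomial ℤ) ^ k * T (4 * (k : ℤ) - n - 2)) x
      = 0 := by
  rw [coeffA_sum]
  refine Finset.sum_eq_zero fun k hk => ?_
  rw [Finset.mem_Icc] at hk
  rw [coeffA_pow_neg_one_mul_T, if_neg ?_]
  have h1 : (1 : ℤ) ≤ (k : ℤ) := by exact_mod_cast hk.1
  have h2 : (k : ℤ) ≤ (n : ℤ) := by exact_mod_cast hk.2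
  omega

lemma S1_hi (n : ℕ) (hn : 1 ≤ n) :
    HiCoeff (∑ k ∈ Finset.Icc 1 n, (-1 : LaurentPolynomial ℤ) ^ k * T (4 * (k : ℤ) - n - 2))
      (3 * (n : ℤ) - 2) ((-1) ^ n) := by
  refine ⟨?_, by positivity, fun k hk => S1_bound n (Or.inl hk)⟩
  rw [coeffA_sum, Finset.sum_eq_single_of_mem n (Finset.mem_Icc.mpr ⟨hn, le_rfl⟩)]
  · rw [coeffA_pow_neg_one_mul_T, if_pos (by ring)]
  · intro k hk hkn
    rw [Finset.mem_Icc] at hk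
    rw [coeffA_pow_neg_one_mul_T, if_neg ?_]
    intro h
    exact hkn (by exact_mod_cast (by omega : (k : ℤ) = (n : ℤ)))

lemma S1_lo (n : ℕ) (hn : 1 ≤ n) :
    LoCoeff (∑ k ∈ Finset.Icc 1 n, (-1 : LaurentPolynomial ℤ) ^ k * T (4 * (k : ℤ) - n - 2))
      (2 - (n : ℤ)) (-1) := by
  refine ⟨?_, by norm_num, fun k hk => S1_bound n (Or.inr hk)⟩
  rw [coeffA_sum, Finset.sum_eq_single_of_mem 1 (Finset.mem_Icc.mpr ⟨le_rfl, hn⟩)]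
  · rw [coeffA_pow_neg_one_mul_T, if_pos (by push_cast; ring)]
    norm_num
  · intro k hk hkn
    rw [Finset.mem_Icc] at hk
    rw [coeffA_pow_neg_one_mul_T, if_neg ?_]
    have h1 : (1 : ℤ) ≤ (k : ℤ) := by exact_mod_cast hk.1
    intro h
    exact hkn (by exact_mod_cast (by omega : (k : ℤ) = 1))

lemma S2_bound (m : ℕ) {x : ℤ} (hx : (m : ℤ) - 2 < x ∨ x < 2 - 3 * (m : ℤ)) :
    coeffA (∑ k ∈ Finset.Icc 1 m, (-1 : LaurentPolynomial ℤ) ^ k * T (-4 * (k : ℤ) + m + 2)) x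
      = 0 := by
  rw [coeffA_sum]
  refine Finset.sum_eq_zero fun k hk => ?_
  rw [Finset.mem_Icc] at hk
  rw [coeffA_pow_neg_one_mul_T, if_neg ?_]
  have h1 : (1 : ℤ) ≤ (k : ℤ) := by exact_mod_cast hk.1
  have h2 : (k : ℤ) ≤ (m : ℤ) := by exact_mod_cast hk.2
  omega

lemma S2_hi (m : ℕ) (hm : 1 ≤ m) :
    HiCoeff (∑ k ∈ Finset.Icc 1 m, (-1 : LaurentPolynomial ℤ) ^ k * T (-4 * (k : ℤ) + m + 2))
      ((m : ℤ) - 2) (-1) := by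
  refine ⟨?_, by norm_num, fun k hk => S2_bound m (Or.inl hk)⟩
  rw [coeffA_sum, Finset.sum_eq_single_of_mem 1 (Finset.mem_Icc.mpr ⟨le_rfl, hm⟩)]
  · rw [coeffA_pow_neg_one_mul_T, if_pos (by push_cast; ring)]
    norm_num
  · intro k hk hkn
    rw [Finset.mem_Icc] at hk
    rw [coeffA_pow_neg_one_mul_T, if_neg ?_]
    have h1 : (1 : ℤ) ≤ (k : ℤ) := by exact_mod_cast hk.1
    intro h
    exact hkn (by exact_mod_cast (by omega : (k : ℤ) = 1))

lemma S2_lo (m : ℕ) (hm : 1 ≤ m) :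
    LoCoeff (∑ k ∈ Finset.Icc 1 m, (-1 : LaurentPolynomial ℤ) ^ k * T (-4 * (k : ℤ) + m + 2))
      (2 - 3 * (m : ℤ)) ((-1) ^ m) := by
  refine ⟨?_, by positivity, fun k hk => S2_bound m (Or.inr hk)⟩
  rw [coeffA_sum, Finset.sum_eq_single_of_mem m (Finset.mem_Icc.mpr ⟨hm, le_rfl⟩)]
  · rw [coeffA_pow_neg_one_mul_T, if_pos (by ring)]
  · intro k hk hkn
    rw [Finset.mem_Icc] at hk
    rw [coeffA_pow_neg_one_mul_T, if_neg ?_]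
    have h2 : (k : ℤ) ≤ (m : ℤ) := by exact_mod_cast hk.2
    intro h
    exact hkn (by exact_mod_cast (by omega : (k : ℤ) = (m : ℤ)))

lemma S3_bound (j : ℕ) {x : ℤ} (hx : 3 * (j : ℤ) - 2 < x ∨ x < -(j : ℤ) - 2) :
    coeffA (∑ k ∈ Finset.range (j + 1),
      (-1 : LaurentPolynomial ℤ) ^ (k + 1) * T (4 * (k : ℤ) - j - 2)) x = 0 := by
  rw [coeffA_sum]
  refine Finset.sum_eq_zero fun k hk => ?_
  rw [Finset.mem_range] at hk
  rw [coeffA_pow_neg_one_mul_T, if_neg ?_]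
  have h2 : (k : ℤ) ≤ (j : ℤ) := by exact_mod_cast Nat.lt_succ_iff.mp hk
  have h1 : (0 : ℤ) ≤ (k : ℤ) := Int.natCast_nonneg k
  omega

lemma S3_hi (j : ℕ) :
    HiCoeff (∑ k ∈ Finset.range (j + 1),
      (-1 : LaurentPolynomial ℤ) ^ (k + 1) * T (4 * (k : ℤ) - j - 2))
      (3 * (j : ℤ) - 2) ((-1) ^ (j + 1)) := by
  refine ⟨?_, by positivity, fun k hk => S3_bound j (Or.inl hk)⟩
  rw [coeffA_sum, Finset.sum_eq_single_of_mem j (Finset.mem_range.mpr (Nat.lt_succ_self j))]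
  · rw [coeffA_pow_neg_one_mul_T, if_pos (by ring)]
  · intro k hk hkn
    rw [Finset.mem_range] at hk
    rw [coeffA_pow_neg_one_mul_T, if_neg ?_]
    intro h
    exact hkn (by exact_mod_cast (by omega : (k : ℤ) = (j : ℤ)))

lemma S3_lo (j : ℕ) :
    LoCoeff (∑ k ∈ Finset.range (j + 1),
      (-1 : LaurentPolynomial ℤ) ^ (k + 1) * T (4 * (k : ℤ) - j - 2))
      (-(j : ℤ) - 2) (-1) := by
  refine ⟨?_, by norm_num, fun k hk => S3_bound j (Or.inr hk)⟩
  rw [coeffA_sum, Finset.sum_eq_single_of_mem 0 (Finset.mem_range.mpr (Nat.succ_pos j))]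
  · rw [coeffA_pow_neg_one_mul_T, if_pos (by push_cast; ring)]
    norm_num
  · intro k hk hkn
    rw [coeffA_pow_neg_one_mul_T, if_neg ?_]
    have h1 : (0 : ℤ) ≤ (k : ℤ) := Int.natCast_nonneg k
    intro h
    exact hkn (by exact_mod_cast (by omega : (k : ℤ) = 0))

end Sums
section Blocks

lemma P_hi (n : ℕ) (hn : 1 ≤ n) : HiCoeff (P n) (3 * (n : ℤ) + 2) (1 * (-1) ^ n) := by
  have hX := (hiCoeff_T4'.mul' (S1_hi n hn)).congr'
    (show (4 : ℤ) + (3 * n - 2) = 3 * n + 2 by ring) rfl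
  exact hX.add_left fun k hk => coeffA_T_ne _ _ (by omega)

lemma P_lo (n : ℕ) (hn : 1 ≤ n) : LoCoeff (P n) (-(n : ℤ) - 6) 1 := by
  exact (loCoeff_T _).add_right
    ((loCoeff_T4'.mul' (S1_lo n hn)).bound_le (by omega))

lemma Pbar_hi (m : ℕ) (hm : 1 ≤ m) : HiCoeff (Pbar m) ((m : ℤ) + 6) 1 := by
  exact (hiCoeff_T _).add_right
    ((hiCoeff_T4'.mul' (S2_hi m hm)).bound_ge (by omega))

lemma Pbar_lo (m : ℕ) (hm : 1 ≤ m) :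
    LoCoeff (Pbar m) (-4 + (2 - 3 * (m : ℤ))) (1 * (-1) ^ m) := by
  exact (loCoeff_T4'.mul' (S2_lo m hm)).add_left fun k hk => coeffA_T_ne _ _ (by omega)

lemma Q_hi (j : ℕ) (hj : 2 ≤ j) : HiCoeff (Q j) (3 * (j : ℤ) - 2) ((-1) ^ (j + 1)) := by
  have hj' : (2 : ℤ) ≤ (j : ℤ) := by exact_mod_cast hj
  exact (S3_hi j).add_left fun k hk => by
    rw [coeffA_neg, coeffA_T_ne _ _ (by omega), neg_zero]

lemma Q_lo (j : ℕ) : LoCoeff (Q j) (-(j : ℤ) - 2) (-1) := by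
  exact (S3_lo j).add_left fun k hk => by
    rw [coeffA_neg, coeffA_T_ne _ _ (by omega), neg_zero]

lemma hiCoeff_p : HiCoeff (-T 6 - T (-6) : LaurentPolynomial ℤ) 6 (-1) := by
  refine ⟨?_, by norm_num, fun k hk => ?_⟩
  · rw [coeffA_sub, coeffA_neg, coeffA_T, coeffA_T, if_pos rfl, if_neg (by omega)]
    norm_num
  · rw [coeffA_sub, coeffA_neg, coeffA_T, coeffA_T, if_neg (by omega), if_neg (by omega)]
    norm_num

lemma loCoeff_p : LoCoeff (-T 6 - T (-6) : LaurentPolynomial ℤ) (-6) (-1) := by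
  refine ⟨?_, by norm_num, fun k hk => ?_⟩
  · rw [coeffA_sub, coeffA_neg, coeffA_T, coeffA_T, if_pos rfl, if_neg (by omega)]
    norm_num
  · rw [coeffA_sub, coeffA_neg, coeffA_T, coeffA_T, if_neg (by omega), if_neg (by omega)]
    norm_num

lemma coeffA_two (k : ℤ) :
    coeffA (2 : LaurentPolynomial ℤ) k = if (0 : ℤ) = k then 2 else 0 := by
  rw [show (2 : LaurentPolynomial ℤ) = T 0 + T 0 by rw [T_zero]; norm_num,
    coeffA_add, coeffA_T]
  split_ifs <;> norm_num

lemma hiCoeff_q : HiCoeff (-T 4 - T (-4) + 2 : LaurentPolynomial ℤ) 4 (-1) := by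
  refine ⟨?_, by norm_num, fun k hk => ?_⟩
  · rw [coeffA_add, coeffA_sub, coeffA_neg, coeffA_T, coeffA_T, coeffA_two,
      if_pos rfl, if_neg (by omega), if_neg (by omega)]
    norm_num
  · rw [coeffA_add, coeffA_sub, coeffA_neg, coeffA_T, coeffA_T, coeffA_two,
      if_neg (by omega), if_neg (by omega), if_neg (by omega)]
    norm_num

lemma loCoeff_q : LoCoeff (-T 4 - T (-4) + 2 : LaurentPolynomial ℤ) (-4) (-1) := by
  refine ⟨?_, by norm_num, fun k hk => ?_⟩
  · rw [coeffA_add, coeffA_sub, coeffA_neg, coeffA_T, coeffA_T, coeffA_two,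
      if_neg (by omega), if_pos rfl, if_neg (by omega)]
    norm_num
  · rw [coeffA_add, coeffA_sub, coeffA_neg, coeffA_T, coeffA_T, coeffA_two,
      if_neg (by omega), if_neg (by omega), if_neg (by omega)]
    norm_num

lemma negT3_pow_eq (j : ℕ) :
    ((-T 3 : LaurentPolynomial ℤ)) ^ j = (-1 : LaurentPolynomial ℤ) ^ j * T (3 * (j : ℤ)) := by
  rw [neg_pow, T_pow, mul_comm (j : ℤ) 3]

lemma hiCoeff_pw (j : ℕ) :
    HiCoeff ((-T 3 : LaurentPolynomial ℤ) ^ j) (3 * (j : ℤ)) ((-1) ^ j) := by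
  rw [negT3_pow_eq]
  exact ⟨by rw [coeffA_pow_neg_one_mul_T, if_pos rfl], pow_ne_zero _ (by norm_num),
    fun k hk => by rw [coeffA_pow_neg_one_mul_T, if_neg (by omega)]⟩

lemma loCoeff_pw (j : ℕ) :
    LoCoeff ((-T 3 : LaurentPolynomial ℤ) ^ j) (3 * (j : ℤ)) ((-1) ^ j) := by
  rw [negT3_pow_eq]
  exact ⟨by rw [coeffA_pow_neg_one_mul_T, if_pos rfl], pow_ne_zero _ (by norm_num),
    fun k hk => by rw [coeffA_pow_neg_one_mul_T, if_neg (by omega)]⟩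

lemma N_hi (j : ℕ) (hj : 2 ≤ j) :
    HiCoeff (N j) (6 + 3 * (j : ℤ)) ((-1) * (-1) ^ j) := by
  have hj' : (2 : ℤ) ≤ (j : ℤ) := by exact_mod_cast hj
  have first := hiCoeff_p.mul' (hiCoeff_pw j)
  have second := hiCoeff_q.mul' (Q_hi j hj)
  exact first.add_right (second.bound_ge (by omega))

lemma N_lo (j : ℕ) (hj : 2 ≤ j) :
    LoCoeff (N j) (-4 + (-(j : ℤ) - 2)) ((-1) * (-1)) := by
  have hj' : (2 : ℤ) ≤ (j : ℤ) := by exact_mod_cast hj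
  have first := loCoeff_p.mul' (loCoeff_pw j)
  have second := loCoeff_q.mul' (Q_lo j)
  exact second.add_left (first.bound_le (by omega))

end Blocks
/-- for m ≥ 1 and n ≥ m+2,
W(n,m) = (−A⁶−A⁻⁶)·N(n−m) + (−A⁴−A⁻⁴+2)·P(n)·P̄(m) has span > 16, in particular span ≠ 16. -/
theorem stmt_6 (n m : ℕ) (hm : 1 ≤ m) (hn : m + 2 ≤ n)
    (W : LaurentPolynomial ℤ)
    (hW : W = (-T 6 - T (-6)) * N (n - m) + (-T 4 - T (-4) + 2) * (P n * Pbar m)) :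
    ∃ dh dl : ℤ, IsHi W dh ∧ IsLo W dl ∧ dh - dl > 16 ∧ dh - dl ≠ 16 := by
  subst hW
  have hj : 2 ≤ n - m := by omega
  have t1hi := hiCoeff_p.mul' (N_hi (n - m) hj)
  have t1lo := loCoeff_p.mul' (N_lo (n - m) hj)
  have t2hi := hiCoeff_q.mul' ((P_hi n (by omega)).mul' (Pbar_hi m hm))
  have t2lo := loCoeff_q.mul' ((P_lo n (by omega)).mul' (Pbar_lo m hm))
  have hWhi := t2hi.add_left (t1hi.bound_ge (by omega))
  have hWlo := t2lo.add_left (t1lo.bound_le (by omega))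
  exact ⟨_, _, ⟨by rw [hWhi.1]; exact hWhi.2.1, hWhi.2.2⟩,
    ⟨by rw [hWlo.1]; exact hWlo.2.1, hWlo.2.2⟩, by omega, by omega⟩
end

section
/- Let m ≥ 2 be an integer and set W(m) = (−A⁶−A⁻⁶)·N(m) + (−A⁴−A⁻⁴+2)·A⁻⁶·R(m) in ℤ[A, A⁻¹]. Then h(W(m)) = 3m+12 and ℓ(W(m)) = −m−15, so that span(W(m)) = 4m+27; in particular span(W(m)) > 16. -/
open LaurentPolynomial Finset

namespace S7

lemma cadd (f g : LaurentPolynomial ℤ) (y : ℤ) : coeffA (f + g) y = coeffA f y + coeffA g y :=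
  Finsupp.add_apply f.coeff g.coeff y

lemma cneg (f : LaurentPolynomial ℤ) (y : ℤ) : coeffA (-f) y = -coeffA f y :=
  Finsupp.neg_apply f.coeff y

lemma csub (f g : LaurentPolynomial ℤ) (y : ℤ) : coeffA (f - g) y = coeffA f y - coeffA g y :=
  Finsupp.sub_apply f.coeff g.coeff y

lemma csum {α : Type} (s : Finset α) (f : α → LaurentPolynomial ℤ) (y : ℤ) :
    coeffA (∑ a ∈ s, f a) y = ∑ a ∈ s, coeffA (f a) y :=
  by rw [coeffA, AddMonoidAlgebra.coeff_sum, Finsupp.finset_sum_apply]; rfl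

lemma cT (n y : ℤ) : coeffA (T n) y = if n = y then 1 else 0 := by
  rw [coeffA, T, AddMonoidAlgebra.coeff_single]; exact Finsupp.single_apply

lemma cTmul (n : ℤ) (f : LaurentPolynomial ℤ) (y : ℤ) :
    coeffA (T n * f) y = coeffA f (y - n) := by
  have h := AddMonoidAlgebra.coeff_single_mul_apply f (1:ℤ) n y
  rw [one_mul, neg_add_eq_sub] at h
  exact h

lemma cnegpowT (k : ℕ) (e y : ℤ) :
    coeffA (((-1 : LaurentPolynomial ℤ))^k * T e) y = if e = y then (-1:ℤ)^k else 0 := by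
  have h : ((-1 : LaurentPolynomial ℤ))^k * T e = (AddMonoidAlgebra.single e ((-1:ℤ)^k) : LaurentPolynomial ℤ) := by
    rw [single_eq_C_mul_T, map_pow, map_neg, map_one]
  rw [show coeffA (((-1 : LaurentPolynomial ℤ))^k * T e) y
      = coeffA (AddMonoidAlgebra.single e ((-1:ℤ)^k) : LaurentPolynomial ℤ) y from by rw [h]]
  rw [coeffA, AddMonoidAlgebra.coeff_single]; exact Finsupp.single_apply

lemma cDmul (f : LaurentPolynomial ℤ) (y : ℤ) :
    coeffA ((-T 6 - T (-6)) * f) y = -coeffA f (y-6) - coeffA f (y+6) := by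
  rw [sub_mul, neg_mul, csub, cneg, cTmul, cTmul, sub_neg_eq_add]

lemma cFmul (f : LaurentPolynomial ℤ) (y : ℤ) :
    coeffA ((-T 4 - T (-4) + 2) * f) y = -coeffA f (y-4) - coeffA f (y+4) + 2 * coeffA f y := by
  have h2 : coeffA ((2:LaurentPolynomial ℤ) * f) y = 2 * coeffA f y := by
    rw [two_mul, cadd]; ring
  rw [add_mul, cadd, sub_mul, neg_mul, csub, cneg, cTmul, cTmul, sub_neg_eq_add, h2]

lemma cnegT3pow (m : ℕ) (y : ℤ) :
    coeffA ((-T 3)^m) y = if (m:ℤ)*3 = y then (-1:ℤ)^m else 0 := by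
  rw [neg_pow, T_pow, cnegpowT]

lemma negT3zero (m : ℕ) (y : ℤ) (h : (m:ℤ)*3 ≠ y) : coeffA ((-T 3)^m) y = 0 := by
  rw [cnegT3pow, if_neg h]

lemma cQ (j : ℕ) (y : ℤ) :
    coeffA (Q j) y = (if 2 - (j:ℤ) = y then (-1:ℤ) else 0)
      + ∑ k ∈ Finset.range (j+1), (if 4*(k:ℤ) - j - 2 = y then (-1:ℤ)^(k+1) else 0) := by
  rw [Q, cadd, cneg, cT, csum]
  congr 1
  · split_ifs <;> ring
  · exact Finset.sum_congr rfl fun k _ => cnegpowT _ _ _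

lemma cRm (m : ℕ) (y : ℤ) :
    coeffA (Rm m) y = (if -(m:ℤ) - 5 = y then (1:ℤ) else 0)
      + ((∑ k ∈ Finset.Icc 1 (m-1), if 4*(k:ℤ) - m - 1 = y - 4 then (-1:ℤ)^k else 0)
        + (∑ k ∈ Finset.Icc 1 (m-1), if 4*(k:ℤ) - m - 1 = y + 4 then (-1:ℤ)^k else 0)) := by
  rw [Rm, cadd, cT, add_mul, cadd, cTmul, cTmul, sub_neg_eq_add, csum, csum]
  congr 2 <;> exact Finset.sum_congr rfl fun k _ => cnegpowT _ _ _

lemma Qzero (m : ℕ) (y : ℤ) (h1 : 2 - (m:ℤ) ≠ y)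
    (h2 : ∀ k : ℕ, k ≤ m → 4*(k:ℤ) - m - 2 ≠ y) : coeffA (Q m) y = 0 := by
  rw [cQ, if_neg h1,
    Finset.sum_eq_zero (fun k hk => if_neg (h2 k (Nat.lt_succ_iff.mp (mem_range.mp hk)))),
    add_zero]

lemma Rmzero (m : ℕ) (y : ℤ) (h1 : -(m:ℤ) - 5 ≠ y)
    (h2 : ∀ k : ℕ, 1 ≤ k → k ≤ m - 1 → 4*(k:ℤ) - m - 1 ≠ y - 4 ∧ 4*(k:ℤ) - m - 1 ≠ y + 4) :
    coeffA (Rm m) y = 0 := by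
  rw [cRm, if_neg h1,
    Finset.sum_eq_zero (fun k hk => if_neg ((h2 k (mem_Icc.mp hk).1 (mem_Icc.mp hk).2).1)),
    Finset.sum_eq_zero (fun k hk => if_neg ((h2 k (mem_Icc.mp hk).1 (mem_Icc.mp hk).2).2))]
  ring

lemma Rmlow (m : ℕ) : coeffA (Rm m) (-(m:ℤ)-5) = 1 := by
  rw [cRm, if_pos rfl,
    Finset.sum_eq_zero (fun k hk => if_neg (by have := (mem_Icc.mp hk).1; omega)),
    Finset.sum_eq_zero (fun k hk => if_neg (by have := (mem_Icc.mp hk).1; omega))]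
  ring

lemma cW (m : ℕ) (i : ℤ) :
    coeffA ((-T 6 - T (-6)) * N m + (-T 4 - T (-4) + 2) * T (-6) * Rm m) i =
      (coeffA ((-T 3)^m) (i-12) + 2*coeffA ((-T 3)^m) i + coeffA ((-T 3)^m) (i+12))
      + (coeffA (Q m) (i-10) + coeffA (Q m) (i-2) - 2*coeffA (Q m) (i-6)
        + coeffA (Q m) (i+2) + coeffA (Q m) (i+10) - 2*coeffA (Q m) (i+6))
      + (-(coeffA (Rm m) (i+2)) + 2*coeffA (Rm m) (i+6) - coeffA (Rm m) (i+10)) := by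
  simp only [N, mul_add, mul_assoc, cadd, cDmul, cFmul, cTmul]
  ring_nf

end S7

/-- for m ≥ 2, W(m) = (−A⁶−A⁻⁶)·N(m) + (−A⁴−A⁻⁴+2)·A⁻⁶·R(m)
has h = 3m+12, ℓ = −m−15, span 4m+27 > 16. -/
theorem stmt_7 (m : ℕ) (hm : 2 ≤ m)
    (W : LaurentPolynomial ℤ)
    (hW : W = (-T 6 - T (-6)) * N m + (-T 4 - T (-4) + 2) * T (-6) * Rm m) :
    IsHi W (3*(m:ℤ) + 12) ∧ IsLo W (-(m:ℤ) - 15) ∧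
    (3*(m:ℤ) + 12) - (-(m:ℤ) - 15) = 4*(m:ℤ) + 27 ∧
    4*(m:ℤ) + 27 > 16 := by
  subst hW
  refine ⟨⟨?_, ?_⟩, ⟨?_, ?_⟩, by ring, by omega⟩
  · -- coefficient at 3m+12 is (-1)^m ≠ 0
    rw [S7.cW,
      show coeffA ((-T 3)^m) (3*(m:ℤ)+12-12) = (-1:ℤ)^m from by
        rw [S7.cnegT3pow, if_pos (by ring)],
      S7.negT3zero m (3*(m:ℤ)+12) (by omega),
      S7.negT3zero m (3*(m:ℤ)+12+12) (by omega),
      S7.Qzero m (3*(m:ℤ)+12-10) (by omega) (fun j hj => by omega),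
      S7.Qzero m (3*(m:ℤ)+12-2) (by omega) (fun j hj => by omega),
      S7.Qzero m (3*(m:ℤ)+12-6) (by omega) (fun j hj => by omega),
      S7.Qzero m (3*(m:ℤ)+12+2) (by omega) (fun j hj => by omega),
      S7.Qzero m (3*(m:ℤ)+12+10) (by omega) (fun j hj => by omega),
      S7.Qzero m (3*(m:ℤ)+12+6) (by omega) (fun j hj => by omega),
      S7.Rmzero m (3*(m:ℤ)+12+2) (by omega) (fun j hj1 hj2 => ⟨by omega, by omega⟩),
      S7.Rmzero m (3*(m:ℤ)+12+6) (by omega) (fun j hj1 hj2 => ⟨by omega, by omega⟩),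
      S7.Rmzero m (3*(m:ℤ)+12+10) (by omega) (fun j hj1 hj2 => ⟨by omega, by omega⟩)]
    simp
  · -- vanishing above 3m+12
    intro k hk
    rw [S7.cW,
      S7.negT3zero m (k-12) (by omega),
      S7.negT3zero m k (by omega),
      S7.negT3zero m (k+12) (by omega),
      S7.Qzero m (k-10) (by omega) (fun j hj => by omega),
      S7.Qzero m (k-2) (by omega) (fun j hj => by omega),
      S7.Qzero m (k-6) (by omega) (fun j hj => by omega),
      S7.Qzero m (k+2) (by omega) (fun j hj => by omega),
      S7.Qzero m (k+10) (by omega) (fun j hj => by omega),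
      S7.Qzero m (k+6) (by omega) (fun j hj => by omega),
      S7.Rmzero m (k+2) (by omega) (fun j hj1 hj2 => ⟨by omega, by omega⟩),
      S7.Rmzero m (k+6) (by omega) (fun j hj1 hj2 => ⟨by omega, by omega⟩),
      S7.Rmzero m (k+10) (by omega) (fun j hj1 hj2 => ⟨by omega, by omega⟩)]
    ring
  · -- coefficient at -m-15 is -1 ≠ 0
    rw [S7.cW,
      S7.negT3zero m (-(m:ℤ)-15-12) (by omega),
      S7.negT3zero m (-(m:ℤ)-15) (by omega),
      S7.negT3zero m (-(m:ℤ)-15+12) (by omega),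
      S7.Qzero m (-(m:ℤ)-15-10) (by omega) (fun j hj => by omega),
      S7.Qzero m (-(m:ℤ)-15-2) (by omega) (fun j hj => by omega),
      S7.Qzero m (-(m:ℤ)-15-6) (by omega) (fun j hj => by omega),
      S7.Qzero m (-(m:ℤ)-15+2) (by omega) (fun j hj => by omega),
      S7.Qzero m (-(m:ℤ)-15+10) (by omega) (fun j hj => by omega),
      S7.Qzero m (-(m:ℤ)-15+6) (by omega) (fun j hj => by omega),
      S7.Rmzero m (-(m:ℤ)-15+2) (by omega) (fun j hj1 hj2 => ⟨by omega, by omega⟩),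
      S7.Rmzero m (-(m:ℤ)-15+6) (by omega) (fun j hj1 hj2 => ⟨by omega, by omega⟩),
      show coeffA (Rm m) (-(m:ℤ)-15+10) = 1 from by
        rw [show (-(m:ℤ)-15+10) = -(m:ℤ)-5 from by ring]; exact S7.Rmlow m]
    norm_num
  · -- vanishing below -m-15
    intro k hk
    rw [S7.cW,
      S7.negT3zero m (k-12) (by omega),
      S7.negT3zero m k (by omega),
      S7.negT3zero m (k+12) (by omega),
      S7.Qzero m (k-10) (by omega) (fun j hj => by omega),
      S7.Qzero m (k-2) (by omega) (fun j hj => by omega),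
      S7.Qzero m (k-6) (by omega) (fun j hj => by omega),
      S7.Qzero m (k+2) (by omega) (fun j hj => by omega),
      S7.Qzero m (k+10) (by omega) (fun j hj => by omega),
      S7.Qzero m (k+6) (by omega) (fun j hj => by omega),
      S7.Rmzero m (k+2) (by omega) (fun j hj1 hj2 => ⟨by omega, by omega⟩),
      S7.Rmzero m (k+6) (by omega) (fun j hj1 hj2 => ⟨by omega, by omega⟩),
      S7.Rmzero m (k+10) (by omega) (fun j hj1 hj2 => ⟨by omega, by omega⟩)]
    ring
end

section
/- Let n, m be integers with m > n > 0 and set W(n,m) = (−A⁶−A⁻⁶)·N(n+m) + (−A⁴−A⁻⁴+2)·P(n)·R(m) in ℤ[A, A⁻¹]. Then h(W(n,m)) = 3(n+m)+12 and ℓ(W(n,m)) = −(n+m)−15, so that span(W(n,m)) = 4(n+m)+27; in particular span(W(n,m)) > 16. -/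
open LaurentPolynomial Finset

namespace Stmt8Aux

abbrev LP := LaurentPolynomial ℤ

lemma coeff_neg_one_pow_T (p : ℕ) (e x : ℤ) :
    (((-1 : LP)^p * T e : LP)).coeff x = if e = x then ((-1:ℤ))^p else 0 := by
  have h1 : ((-1 : LP)^p) = C ((-1:ℤ)^p) := by
    rw [map_pow, map_neg, map_one]
  rw [h1, ← single_eq_C_mul_T, AddMonoidAlgebra.coeff_single, Finsupp.single_apply]

lemma mul_coeff_hi (y z : LP) (d e : ℤ)
    (hy : ∀ k, d < k → y.coeff k = 0) (hz : ∀ k, e < k → z.coeff k = 0) (x : ℤ) (hx : d + e ≤ x) :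
    (y * z).coeff x = if x = d + e then y.coeff d * z.coeff e else 0 := by
  classical
  rw [AddMonoidAlgebra.coeff_mul, Finsupp.sum]
  have step : ∀ a ∈ y.coeff.support,
      (z.coeff.sum fun a₂ b₂ => if a + a₂ = x then y.coeff a * b₂ else 0)
      = ∑ b ∈ z.coeff.support, if a = d ∧ b = e ∧ x = d + e then y.coeff d * z.coeff e else 0 := by
    intro a ha
    rw [Finsupp.sum]
    apply Finset.sum_congr rfl
    intro b hb
    have ha' : y.coeff a ≠ 0 := Finsupp.mem_support_iff.mp ha
    have hb' : z.coeff b ≠ 0 := Finsupp.mem_support_iff.mp hb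
    have hA : a ≤ d := by by_contra h'; exact ha' (hy a (lt_of_not_ge h'))
    have hB : b ≤ e := by by_contra h'; exact hb' (hz b (lt_of_not_ge h'))
    by_cases h : a + b = x
    · have h1 : a = d ∧ b = e ∧ x = d + e := by omega
      simp [h, h1]
    · have h1 : ¬(a = d ∧ b = e ∧ x = d + e) := by
        rintro ⟨rfl, rfl, rfl⟩; omega
      simp [h, h1]
  rw [Finset.sum_congr rfl step]
  by_cases hx' : x = d + e
  · simp only [hx', and_true, if_pos rfl]
    have : ∀ (a b : ℤ), (if a = d ∧ b = e then y.coeff d * z.coeff e else 0)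
        = (if a = d then y.coeff d else 0) * (if b = e then z.coeff e else 0) := by
      intro a b; split_ifs with h1 h2 h3 <;> simp_all
    simp_rw [this]
    rw [← Finset.sum_mul_sum, Finset.sum_ite_eq', Finset.sum_ite_eq']
    by_cases hd : d ∈ y.coeff.support <;> by_cases he : e ∈ z.coeff.support <;>
      simp_all [Finsupp.notMem_support_iff]
  · simp [hx']

lemma mul_coeff_lo (y z : LP) (d e : ℤ)
    (hy : ∀ k, k < d → y.coeff k = 0) (hz : ∀ k, k < e → z.coeff k = 0) (x : ℤ) (hx : x ≤ d + e) :
    (y * z).coeff x = if x = d + e then y.coeff d * z.coeff e else 0 := by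
  classical
  rw [AddMonoidAlgebra.coeff_mul, Finsupp.sum]
  have step : ∀ a ∈ y.coeff.support,
      (z.coeff.sum fun a₂ b₂ => if a + a₂ = x then y.coeff a * b₂ else 0)
      = ∑ b ∈ z.coeff.support, if a = d ∧ b = e ∧ x = d + e then y.coeff d * z.coeff e else 0 := by
    intro a ha
    rw [Finsupp.sum]
    apply Finset.sum_congr rfl
    intro b hb
    have ha' : y.coeff a ≠ 0 := Finsupp.mem_support_iff.mp ha
    have hb' : z.coeff b ≠ 0 := Finsupp.mem_support_iff.mp hb
    have hA : d ≤ a := by by_contra h'; exact ha' (hy a (lt_of_not_ge h'))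
    have hB : e ≤ b := by by_contra h'; exact hb' (hz b (lt_of_not_ge h'))
    by_cases h : a + b = x
    · have h1 : a = d ∧ b = e ∧ x = d + e := by omega
      simp [h, h1]
    · have h1 : ¬(a = d ∧ b = e ∧ x = d + e) := by
        rintro ⟨rfl, rfl, rfl⟩; omega
      simp [h, h1]
  rw [Finset.sum_congr rfl step]
  by_cases hx' : x = d + e
  · simp only [hx', and_true, if_pos rfl]
    have : ∀ (a b : ℤ), (if a = d ∧ b = e then y.coeff d * z.coeff e else 0)
        = (if a = d then y.coeff d else 0) * (if b = e then z.coeff e else 0) := by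
      intro a b; split_ifs with h1 h2 h3 <;> simp_all
    simp_rw [this]
    rw [← Finset.sum_mul_sum, Finset.sum_ite_eq', Finset.sum_ite_eq']
    by_cases hd : d ∈ y.coeff.support <;> by_cases he : e ∈ z.coeff.support <;>
      simp_all [Finsupp.notMem_support_iff]
  · simp [hx']

def TopAt (y : LP) (d c : ℤ) : Prop := y.coeff d = c ∧ ∀ k, d < k → y.coeff k = 0
def BotAt (y : LP) (d c : ℤ) : Prop := y.coeff d = c ∧ ∀ k, k < d → y.coeff k = 0

lemma TopAt.congr {y d c} (h : TopAt y d c) {d' c'} (hd : d = d') (hc : c = c') :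
    TopAt y d' c' := hd ▸ hc ▸ h

lemma BotAt.congr {y d c} (h : BotAt y d c) {d' c'} (hd : d = d') (hc : c = c') :
    BotAt y d' c' := hd ▸ hc ▸ h

lemma TopAt.relax {y d c} (h : TopAt y d c) {e : ℤ} (he : d < e) : TopAt y e 0 :=
  ⟨h.2 e he, fun k hk => h.2 k (he.trans hk)⟩

lemma BotAt.relax {y d c} (h : BotAt y d c) {e : ℤ} (he : e < d) : BotAt y e 0 :=
  ⟨h.2 e he, fun k hk => h.2 k (hk.trans he)⟩

lemma TopAt.mul {y z d e c f} (hy : TopAt y d c) (hz : TopAt z e f) :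
    TopAt (y * z) (d + e) (c * f) := by
  constructor
  · rw [mul_coeff_hi y z d e hy.2 hz.2 (d+e) le_rfl, if_pos rfl, hy.1, hz.1]
  · intro k hk
    rw [mul_coeff_hi y z d e hy.2 hz.2 k hk.le, if_neg (by omega)]

lemma BotAt.mul {y z d e c f} (hy : BotAt y d c) (hz : BotAt z e f) :
    BotAt (y * z) (d + e) (c * f) := by
  constructor
  · rw [mul_coeff_lo y z d e hy.2 hz.2 (d+e) le_rfl, if_pos rfl, hy.1, hz.1]
  · intro k hk
    rw [mul_coeff_lo y z d e hy.2 hz.2 k hk.le, if_neg (by omega)]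

lemma TopAt.add {y z d c c'} (hy : TopAt y d c) (hz : TopAt z d c') :
    TopAt (y + z) d (c + c') := by
  refine ⟨?_, fun k hk => ?_⟩
  · show y.coeff d + z.coeff d = c + c'
    rw [hy.1, hz.1]
  · show y.coeff k + z.coeff k = 0
    rw [hy.2 k hk, hz.2 k hk, add_zero]

lemma BotAt.add {y z d c c'} (hy : BotAt y d c) (hz : BotAt z d c') :
    BotAt (y + z) d (c + c') := by
  refine ⟨?_, fun k hk => ?_⟩
  · show y.coeff d + z.coeff d = c + c'
    rw [hy.1, hz.1]
  · show y.coeff k + z.coeff k = 0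
    rw [hy.2 k hk, hz.2 k hk, add_zero]

lemma TopAt.neg {y d c} (hy : TopAt y d c) : TopAt (-y) d (-c) := by
  refine ⟨?_, fun k hk => ?_⟩
  · show -(y.coeff d) = -c; rw [hy.1]
  · show -(y.coeff k) = 0; rw [hy.2 k hk, neg_zero]

lemma BotAt.neg {y d c} (hy : BotAt y d c) : BotAt (-y) d (-c) := by
  refine ⟨?_, fun k hk => ?_⟩
  · show -(y.coeff d) = -c; rw [hy.1]
  · show -(y.coeff k) = 0; rw [hy.2 k hk, neg_zero]

/-- left summand dominates -/
lemma TopAt.add_left {y z d c d' c'} (hy : TopAt y d c) (hz : TopAt z d' c')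
    (h : d' < d) : TopAt (y + z) d c :=
  ((hy.add (hz.relax h))).congr rfl (add_zero c)

/-- right summand dominates -/
lemma TopAt.add_right {y z d c d' c'} (hy : TopAt y d' c') (hz : TopAt z d c)
    (h : d' < d) : TopAt (y + z) d c :=
  (((hy.relax h).add hz)).congr rfl (zero_add c)

lemma BotAt.add_left {y z d c d' c'} (hy : BotAt y d c) (hz : BotAt z d' c')
    (h : d < d') : BotAt (y + z) d c :=
  ((hy.add (hz.relax h))).congr rfl (add_zero c)

lemma BotAt.add_right {y z d c d' c'} (hy : BotAt y d' c') (hz : BotAt z d c)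
    (h : d < d') : BotAt (y + z) d c :=
  (((hy.relax h).add hz)).congr rfl (zero_add c)

lemma topAt_T (a : ℤ) : TopAt (T a) a 1 := by
  refine ⟨by simp, fun k hk => ?_⟩
  rw [T_apply, if_neg (by omega)]

lemma botAt_T (a : ℤ) : BotAt (T a) a 1 := by
  refine ⟨by simp, fun k hk => ?_⟩
  rw [T_apply, if_neg (by omega)]

lemma two_eq : (2 : LP) = T 0 + T 0 := by
  rw [T_zero]; norm_num

lemma coeff_sum (s : Finset ℕ) (p : ℕ → ℕ) (g : ℕ → ℤ) (x : ℤ) :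
    ((∑ k ∈ s, (-1 : LP)^(p k) * T (g k) : LP)).coeff x
      = ∑ k ∈ s, if g k = x then ((-1:ℤ))^(p k) else 0 := by
  rw [AddMonoidAlgebra.coeff_sum, Finset.sum_apply']
  exact Finset.sum_congr rfl fun k _ => coeff_neg_one_pow_T _ _ _

lemma topAt_sum (s : Finset ℕ) (p : ℕ → ℕ) (g : ℕ → ℤ) (k0 : ℕ) (hmem : k0 ∈ s)
    (hmax : ∀ k ∈ s, g k ≤ g k0) (hinj : ∀ k ∈ s, g k = g k0 → k = k0) :
    TopAt (∑ k ∈ s, (-1 : LP)^(p k) * T (g k)) (g k0) ((-1)^(p k0)) := by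
  constructor
  · rw [coeff_sum]
    have h1 : ∀ k ∈ s, (if g k = g k0 then ((-1:ℤ))^(p k) else 0)
        = if k = k0 then ((-1:ℤ))^(p k) else 0 := by
      intro k hk
      by_cases h : k = k0
      · simp [h]
      · rw [if_neg h, if_neg (fun hg => h (hinj k hk hg))]
    rw [Finset.sum_congr rfl h1, Finset.sum_ite_eq' s k0, if_pos hmem]
  · intro x hx
    rw [coeff_sum]
    apply Finset.sum_eq_zero
    intro k hk
    rw [if_neg]
    have := hmax k hk
    omega

lemma botAt_sum (s : Finset ℕ) (p : ℕ → ℕ) (g : ℕ → ℤ) (k0 : ℕ) (hmem : k0 ∈ s)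
    (hmin : ∀ k ∈ s, g k0 ≤ g k) (hinj : ∀ k ∈ s, g k = g k0 → k = k0) :
    BotAt (∑ k ∈ s, (-1 : LP)^(p k) * T (g k)) (g k0) ((-1)^(p k0)) := by
  constructor
  · rw [coeff_sum]
    have h1 : ∀ k ∈ s, (if g k = g k0 then ((-1:ℤ))^(p k) else 0)
        = if k = k0 then ((-1:ℤ))^(p k) else 0 := by
      intro k hk
      by_cases h : k = k0
      · simp [h]
      · rw [if_neg h, if_neg (fun hg => h (hinj k hk hg))]
    rw [Finset.sum_congr rfl h1, Finset.sum_ite_eq' s k0, if_pos hmem]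
  · intro x hx
    rw [coeff_sum]
    apply Finset.sum_eq_zero
    intro k hk
    rw [if_neg]
    have := hmin k hk
    omega

lemma negT3_pow (jj : ℕ) : ((-T 3)^jj : LP) = (-1 : LP)^jj * T (3*jj) := by
  rw [neg_pow, T_pow]
  congr 1
  · congr 1; omega

lemma topAt_negT3_pow (jj : ℕ) : TopAt ((-T 3)^jj) (3*jj) ((-1)^jj) := by
  rw [negT3_pow]
  refine ⟨?_, fun k hk => ?_⟩
  · rw [coeff_neg_one_pow_T, if_pos rfl]
  · rw [coeff_neg_one_pow_T, if_neg (by omega)]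

lemma botAt_negT3_pow (jj : ℕ) : BotAt ((-T 3)^jj) (3*jj) ((-1)^jj) := by
  rw [negT3_pow]
  refine ⟨?_, fun k hk => ?_⟩
  · rw [coeff_neg_one_pow_T, if_pos rfl]
  · rw [coeff_neg_one_pow_T, if_neg (by omega)]

-- components

lemma topAt_T4T4 : TopAt (T 4 + T (-4) : LP) 4 1 :=
  (topAt_T 4).add_left (topAt_T (-4)) (by norm_num)

lemma botAt_T4T4 : BotAt (T 4 + T (-4) : LP) (-4) 1 :=
  BotAt.add_right (botAt_T 4) (botAt_T (-4)) (by norm_num)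

lemma topAt_A : TopAt (-T 6 - T (-6) : LP) 6 (-1) := by
  rw [sub_eq_add_neg]
  exact ((topAt_T 6).neg.add_left (topAt_T (-6)).neg (by norm_num))

lemma botAt_A : BotAt (-T 6 - T (-6) : LP) (-6) (-1) := by
  rw [sub_eq_add_neg]
  exact BotAt.add_right (botAt_T 6).neg (botAt_T (-6)).neg (by norm_num)

lemma topAt_B : TopAt (-T 4 - T (-4) + 2 : LP) 4 (-1) := by
  rw [two_eq, sub_eq_add_neg]
  refine TopAt.add_left ?_ ((topAt_T 0).add (topAt_T 0)) (by norm_num)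
  exact ((topAt_T 4).neg.add_left (topAt_T (-4)).neg (by norm_num))

lemma botAt_B : BotAt (-T 4 - T (-4) + 2 : LP) (-4) (-1) := by
  rw [two_eq, sub_eq_add_neg]
  refine BotAt.add_left ?_ ((botAt_T 0).add (botAt_T 0)) (by norm_num)
  exact BotAt.add_right (botAt_T 4).neg (botAt_T (-4)).neg (by norm_num)

lemma topAt_P (n : ℕ) (hn : 0 < n) : TopAt (P n) (3*(n:ℤ)+2) ((-1)^n) := by
  have hS : TopAt (∑ k ∈ Finset.Icc 1 n, (-1 : LP)^k * T (4*(k:ℤ) - n - 2))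
      (3*(n:ℤ)-2) ((-1)^n) := by
    have H := topAt_sum (Finset.Icc 1 n) (fun k => k) (fun k => 4*(k:ℤ) - n - 2) n
      (Finset.mem_Icc.mpr ⟨hn, le_rfl⟩)
      (fun k hk => by have := (Finset.mem_Icc.mp hk).2; omega)
      (fun k hk h => by have := (Finset.mem_Icc.mp hk).2; omega)
    exact H.congr (by push_cast; ring) rfl
  unfold P
  exact TopAt.add_right (topAt_T _)
    ((topAt_T4T4.mul hS).congr (by ring) (one_mul _)) (by omega)

lemma botAt_P (n : ℕ) (hn : 0 < n) : BotAt (P n) (-(n:ℤ)-6) 1 := by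
  have hS : BotAt (∑ k ∈ Finset.Icc 1 n, (-1 : LP)^k * T (4*(k:ℤ) - n - 2))
      (2-(n:ℤ)) (-1) := by
    have H := botAt_sum (Finset.Icc 1 n) (fun k => k) (fun k => 4*(k:ℤ) - n - 2) 1
      (Finset.mem_Icc.mpr ⟨le_rfl, hn⟩)
      (fun k hk => by have := (Finset.mem_Icc.mp hk).1; omega)
      (fun k hk h => by have := (Finset.mem_Icc.mp hk).1; omega)
    exact H.congr (by push_cast; ring) (by norm_num)
  unfold P
  exact BotAt.add_left (botAt_T _)
    ((botAt_T4T4.mul hS).congr (d' := -(n:ℤ)-2) (c' := -1) (by ring) (by norm_num)) (by omega)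

lemma topAt_R (m : ℕ) (hm : 2 ≤ m) : TopAt (Rm m) (3*(m:ℤ)-1) ((-1)^(m-1)) := by
  have hS : TopAt (∑ k ∈ Finset.Icc 1 (m-1), (-1 : LP)^k * T (4*(k:ℤ) - m - 1))
      (3*(m:ℤ)-5) ((-1)^(m-1)) := by
    have H := topAt_sum (Finset.Icc 1 (m-1)) (fun k => k) (fun k => 4*(k:ℤ) - m - 1) (m-1)
      (Finset.mem_Icc.mpr ⟨by omega, le_rfl⟩)
      (fun k hk => by have := (Finset.mem_Icc.mp hk).2; omega)
      (fun k hk h => by have := (Finset.mem_Icc.mp hk).2; omega)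
    exact H.congr (by omega) rfl
  unfold Rm
  exact TopAt.add_right (topAt_T _)
    ((topAt_T4T4.mul hS).congr (by ring) (one_mul _)) (by omega)

lemma botAt_R (m : ℕ) (hm : 2 ≤ m) : BotAt (Rm m) (-(m:ℤ)-5) 1 := by
  have hS : BotAt (∑ k ∈ Finset.Icc 1 (m-1), (-1 : LP)^k * T (4*(k:ℤ) - m - 1))
      (3-(m:ℤ)) (-1) := by
    have H := botAt_sum (Finset.Icc 1 (m-1)) (fun k => k) (fun k => 4*(k:ℤ) - m - 1) 1
      (Finset.mem_Icc.mpr ⟨le_rfl, by omega⟩)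
      (fun k hk => by have := (Finset.mem_Icc.mp hk).1; omega)
      (fun k hk h => by have := (Finset.mem_Icc.mp hk).1; omega)
    exact H.congr (by push_cast; ring) (by norm_num)
  unfold Rm
  exact BotAt.add_left (botAt_T _)
    ((botAt_T4T4.mul hS).congr (d' := -(m:ℤ)-1) (c' := -1) (by ring) (by norm_num)) (by omega)

lemma topAt_Q (j : ℕ) (hj : 2 ≤ j) : TopAt (Q j) (3*(j:ℤ)-2) ((-1)^(j+1)) := by
  have hS : TopAt (∑ k ∈ Finset.range (j+1), (-1 : LP)^(k+1) * T (4*(k:ℤ) - j - 2))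
      (3*(j:ℤ)-2) ((-1)^(j+1)) := by
    have H := topAt_sum (Finset.range (j+1)) (fun k => k+1) (fun k => 4*(k:ℤ) - j - 2) j
      (Finset.mem_range.mpr (by omega))
      (fun k hk => by have := Finset.mem_range.mp hk; omega)
      (fun k hk h => by have := Finset.mem_range.mp hk; omega)
    exact H.congr (by push_cast; ring) rfl
  unfold Q
  exact TopAt.add_right (topAt_T _).neg hS (by omega)

lemma botAt_Q (j : ℕ) (hj : 2 ≤ j) : BotAt (Q j) (-(j:ℤ)-2) (-1) := by
  have hS : BotAt (∑ k ∈ Finset.range (j+1), (-1 : LP)^(k+1) * T (4*(k:ℤ) - j - 2))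
      (-(j:ℤ)-2) (-1) := by
    have H := botAt_sum (Finset.range (j+1)) (fun k => k+1) (fun k => 4*(k:ℤ) - j - 2) 0
      (Finset.mem_range.mpr (by omega))
      (fun k hk => by have := Finset.mem_range.mp hk; omega)
      (fun k hk h => by have := Finset.mem_range.mp hk; omega)
    exact H.congr (by push_cast; ring) (by norm_num)
  unfold Q
  exact BotAt.add_right ((botAt_T (2-(j:ℤ))).neg) hS (by omega)

lemma topAt_N (j : ℕ) (hj : 2 ≤ j) : TopAt (N j) (3*(j:ℤ)+6) (-(-1:ℤ)^j) := by
  unfold N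
  refine TopAt.add_left ((topAt_A.mul (topAt_negT3_pow j)).congr (by ring) (by ring))
    ((topAt_B.mul (topAt_Q j hj)).congr rfl rfl) (by omega)

lemma botAt_N (j : ℕ) (hj : 2 ≤ j) : BotAt (N j) (-(j:ℤ)-6) 1 := by
  unfold N
  refine BotAt.add_right ((botAt_A.mul (botAt_negT3_pow j)).congr rfl rfl)
    ((botAt_B.mul (botAt_Q j hj)).congr (by ring) (by norm_num)) (by omega)

end Stmt8Aux

open Stmt8Aux in
/-- for m > n > 0, W(n,m) = (−A⁶−A⁻⁶)·N(n+m) + (−A⁴−A⁻⁴+2)·P(n)·R(m)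
has h = 3(n+m)+12, ℓ = −(n+m)−15, span 4(n+m)+27 > 16. -/
theorem stmt_8 (n m : ℕ) (hn : 0 < n) (hm : n < m)
    (W : LaurentPolynomial ℤ)
    (hW : W = (-T 6 - T (-6)) * N (n + m) + (-T 4 - T (-4) + 2) * (P n * Rm m)) :
    IsHi W (3*((n:ℤ) + m) + 12) ∧ IsLo W (-((n:ℤ) + m) - 15) ∧
    (3*((n:ℤ) + m) + 12) - (-((n:ℤ) + m) - 15) = 4*((n:ℤ) + m) + 27 ∧
    4*((n:ℤ) + m) + 27 > 16 := by
  have hj : 2 ≤ n + m := by omega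
  have hm2 : 2 ≤ m := by omega
  have hTop : TopAt W (3*((n:ℤ) + m) + 12) (-(-(-1:ℤ)^(n+m))) := by
    rw [hW]
    refine TopAt.add_left
      ((topAt_A.mul (topAt_N (n+m) hj)).congr (by push_cast; ring) (by ring))
      ((topAt_B.mul ((topAt_P n hn).mul (topAt_R m hm2))).congr rfl rfl)
      (by push_cast; omega)
  have hBot : BotAt W (-((n:ℤ) + m) - 15) (-1) := by
    rw [hW]
    refine BotAt.add_right
      ((botAt_A.mul (botAt_N (n+m) hj)).congr (d' := -((n:ℤ)+m)-12) (c' := -1)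
        (by push_cast; ring) (by norm_num))
      ((botAt_B.mul ((botAt_P n hn).mul (botAt_R m hm2))).congr (by push_cast; ring) (by norm_num))
      (by push_cast; omega)
  refine ⟨⟨?_, hTop.2⟩, ⟨?_, hBot.2⟩, by ring, by omega⟩
  · show W.coeff _ ≠ 0
    rw [hTop.1]
    simp [pow_ne_zero]
  · show W.coeff _ ≠ 0
    rw [hBot.1]
    norm_num
end
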